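/- arXiv:2207.08720 — 3 statements merged into one kernel-verified Lean document; each statement's English description precedes it below -/
import Mathlib

section
/- Let 𝕁_⊤ = 𝕁 ∪ {⊤} be Johnstone's dcpo with a top element adjoined, and let Σ𝕁_⊤ denote 𝕁_⊤ with the Scott topology. Then K(Σ𝕁_⊤), the poset of nonempty compact saturated subsets of Σ𝕁_⊤ under the Smyth order, is a dcpo, but Σ𝕁_⊤ is not well-filtered. -/
open Set Topology TopologicalSpace

universe u v

/-- A subset of a topological space is *saturated* if it equals the intersection of the
open sets containing it. -/
def IsSat {X : Type u} [TopologicalSpace X] (A : Set X) : Prop :=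
  A = ⋂₀ {U : Set X | IsOpen U ∧ A ⊆ U}

/-- The saturation `↑a` of a point `a` : the intersection of all open sets containing `a`. -/
def satPt {X : Type u} [TopologicalSpace X] (a : X) : Set X :=
  ⋂₀ {U : Set X | IsOpen U ∧ a ∈ U}

/-- `KS X` is the collection of all nonempty compact saturated subsets of `X`. -/
def KS (X : Type u) [TopologicalSpace X] : Type u :=
  {K : Set X // K.Nonempty ∧ IsCompact K ∧ IsSat K}

/-- The *Smyth order* on `KS X` : `K ≤ L` iff `L ⊆ K` (reverse inclusion). -/
instance KS.instPartialOrder {X : Type u} [TopologicalSpace X] : PartialOrder (KS X) where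
  le K L := L.1 ⊆ K.1
  le_refl K := subset_rfl
  le_trans K L M h₁ h₂ := by intro x hx; exact h₁ (h₂ hx)
  le_antisymm K L h₁ h₂ := by exact Subtype.ext (subset_antisymm h₂ h₁)

/-- The *upper Vietoris topology* on `KS X`, generated by the sets `□U = {K | K ⊆ U}`
for `U` open in `X`.  The resulting space is the Smyth power space `P_S(X)`. -/
def upperVietoris (X : Type u) [TopologicalSpace X] : TopologicalSpace (KS X) :=
  TopologicalSpace.generateFrom
    {S : Set (KS X) | ∃ U : Set X, IsOpen U ∧ S = {K : KS X | K.1 ⊆ U}}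

/-- Scott-open subsets of a preorder: upper sets inaccessible by suprema of
(nonempty) directed sets. -/
def ScottOpen {P : Type u} [Preorder P] (U : Set P) : Prop :=
  IsUpperSet U ∧ ∀ d : Set P, d.Nonempty → DirectedOn (· ≤ ·) d →
    ∀ a : P, IsLUB d a → a ∈ U → (d ∩ U).Nonempty

/-- The Scott topology of a preorder. -/
def scottTop (P : Type u) [Preorder P] : TopologicalSpace P where
  IsOpen := ScottOpen
  isOpen_univ := ⟨isUpperSet_univ, fun d hd _ _ _ _ => by simpa using hd⟩
  isOpen_inter := by
    rintro U V ⟨hUu, hUd⟩ ⟨hVu, hVd⟩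
    refine ⟨hUu.inter hVu, fun d hd hdir a ha haUV => ?_⟩
    obtain ⟨x, hxd, hxU⟩ := hUd d hd hdir a ha haUV.1
    obtain ⟨y, hyd, hyV⟩ := hVd d hd hdir a ha haUV.2
    obtain ⟨z, hzd, hxz, hyz⟩ := hdir x hxd y hyd
    exact ⟨z, hzd, hUu hxz hxU, hVu hyz hyV⟩
  isOpen_sUnion := by
    intro S hS
    refine ⟨isUpperSet_sUnion fun s hs => (hS s hs).1, fun d hd hdir a ha haU => ?_⟩
    obtain ⟨t, htS, hat⟩ := haU
    obtain ⟨x, hxd, hxt⟩ := (hS t htS).2 d hd hdir a ha hat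
    exact ⟨x, hxd, t, htS, hxt⟩

/-- A topological space is *well-filtered* if for every nonempty family of nonempty compact
saturated sets which is filtered under reverse inclusion and every open `U` containing the
intersection of the family, some member of the family is contained in `U`. -/
def WellFiltered (X : Type u) [TopologicalSpace X] : Prop :=
  ∀ 𝒦 : Set (Set X), 𝒦.Nonempty →
    (∀ K ∈ 𝒦, K.Nonempty ∧ IsCompact K ∧ IsSat K) →
    (∀ K₁ ∈ 𝒦, ∀ K₂ ∈ 𝒦, ∃ K₃ ∈ 𝒦, K₃ ⊆ K₁ ∧ K₃ ⊆ K₂) →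
    ∀ U : Set X, IsOpen U → ⋂₀ 𝒦 ⊆ U → ∃ K ∈ 𝒦, K ⊆ U

/-- The specialization order of a topological space: `x ≤ y` iff `x ∈ cl {y}`. -/
def specLE {X : Type u} [TopologicalSpace X] (x y : X) : Prop := x ∈ closure {y}

/-- Least upper bound with respect to an explicit relation. -/
def RelLUB {P : Type u} (r : P → P → Prop) (d : Set P) (a : P) : Prop :=
  (∀ x ∈ d, r x a) ∧ ∀ b : P, (∀ x ∈ d, r x b) → r a b

/-- Scott openness with respect to an explicit relation. -/
def RelScottOpen {P : Type u} (r : P → P → Prop) (U : Set P) : Prop :=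
  (∀ ⦃x y : P⦄, x ∈ U → r x y → y ∈ U) ∧
  ∀ d : Set P, d.Nonempty → DirectedOn r d → ∀ a : P, RelLUB r d a → a ∈ U → (d ∩ U).Nonempty

/-- A `d`-space (monotone convergence space): the specialization order is directed complete
and every open set is Scott open with respect to the specialization order. -/
def DSpace (X : Type u) [TopologicalSpace X] : Prop :=
  (∀ d : Set X, d.Nonempty → DirectedOn specLE d → ∃ a : X, RelLUB specLE d a) ∧
  ∀ U : Set X, IsOpen U → RelScottOpen specLE U

/-- A space is *sober* if every irreducible closed set is the closure of a unique point. -/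
def SoberSp (Z : Type u) [TopologicalSpace Z] : Prop :=
  ∀ A : Set Z, IsClosed A → IsIrreducible A → ∃! z : Z, A = closure {z}

/-- A closed set `A` is a *Rudin set* if there is a (nonempty) family of nonempty compact
saturated sets, filtered under reverse inclusion, such that `A` is a minimal closed set
meeting every member of the family. -/
def RudinSet {X : Type u} [TopologicalSpace X] (A : Set X) : Prop :=
  IsClosed A ∧
  ∃ 𝒦 : Set (Set X), 𝒦.Nonempty ∧
    (∀ K ∈ 𝒦, K.Nonempty ∧ IsCompact K ∧ IsSat K) ∧
    (∀ K₁ ∈ 𝒦, ∀ K₂ ∈ 𝒦, ∃ K₃ ∈ 𝒦, K₃ ⊆ K₁ ∧ K₃ ⊆ K₂) ∧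
    (∀ K ∈ 𝒦, (A ∩ K).Nonempty) ∧
    (∀ B : Set X, IsClosed B → (∀ K ∈ 𝒦, (B ∩ K).Nonempty) → B ⊆ A → B = A)

/-- A *Rudin space*: every irreducible closed subset is a Rudin set. -/
def RudinSpace (X : Type u) [TopologicalSpace X] : Prop :=
  ∀ A : Set X, IsClosed A → IsIrreducible A → RudinSet A

/-- A closed set `A` is *well-filtered determined* (WD) if every continuous map into a
well-filtered T₀ space sends it to a set whose closure is a point closure. -/
def WDSet {X : Type u} [TopologicalSpace X] (A : Set X) : Prop :=
  ∀ (Y : Type v) [TopologicalSpace Y] [T0Space Y], WellFiltered Y →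
    ∀ f : X → Y, Continuous f → ∃ y : Y, closure (f '' A) = closure {y}

/-- A *well-filtered determined (WD) space*: every irreducible closed subset is WD. -/
def WDSpace (X : Type u) [TopologicalSpace X] : Prop :=
  ∀ A : Set X, IsClosed A → IsIrreducible A → WDSet.{u, v} A

/-- Property S: for every irreducible closed set `A`, the family `{↑a : a ∈ A}` is an
irreducible subset of the Scott power space `Σ K(X)`, or
`◇A = {K ∈ K(X) : K ∩ A ≠ ∅}` is an irreducible closed subset of `Σ K(X)`. -/
def PropertyS (X : Type u) [TopologicalSpace X] : Prop :=
  ∀ A : Set X, IsClosed A → IsIrreducible A →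
    @IsIrreducible (KS X) (scottTop (KS X)) {K : KS X | ∃ a ∈ A, K.1 = satPt a} ∨
    (@IsClosed (KS X) (scottTop (KS X)) {K : KS X | (K.1 ∩ A).Nonempty} ∧
      @IsIrreducible (KS X) (scottTop (KS X)) {K : KS X | (K.1 ∩ A).Nonempty})

/-- The order of Jia's dcpo on `ℕ × ℕ × (ℕ ∪ {∞})`:
`(i₁,j₁,k₁) ≤ (i₂,j₂,k₂)` iff (`i₁ = i₂`, `j₁ = j₂` and `k₁ ≤ k₂`) or
(`i₂ = i₁ + 1`, `k₁ ≤ j₂` and `k₂ = ∞`). -/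
def LJiaLE (a b : ℕ × ℕ × WithTop ℕ) : Prop :=
  (a.1 = b.1 ∧ a.2.1 = b.2.1 ∧ a.2.2 ≤ b.2.2) ∨
  (b.1 = a.1 + 1 ∧ a.2.2 ≤ (b.2.1 : WithTop ℕ) ∧ b.2.2 = ⊤)

section Aux

variable {JT : Type} [PartialOrder JT] (e : JT ≃ WithTop (ℕ × WithTop ℕ))

/-- the point of `JT` coded by `p`. -/
def jpt (p : ℕ × WithTop ℕ) : JT := e.symm (p : WithTop (ℕ × WithTop ℕ))

/-- the top point of `JT`. -/
def jtop : JT := e.symm ⊤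

variable (horder : ∀ a b : JT, a ≤ b ↔ (e b = ⊤ ∨ ∃ p q : ℕ × WithTop ℕ,
      e a = (p : WithTop (ℕ × WithTop ℕ)) ∧ e b = (q : WithTop (ℕ × WithTop ℕ)) ∧
      ((p.1 = q.1 ∧ p.2 ≤ q.2) ∨ (q.2 = ⊤ ∧ p.2 ≤ (q.1 : WithTop ℕ)))))

lemma e_jpt (p : ℕ × WithTop ℕ) : e (jpt e p) = (p : WithTop (ℕ × WithTop ℕ)) :=
  e.apply_symm_apply _

lemma e_jtop : e (jtop e) = ⊤ := e.apply_symm_apply _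

lemma jpt_injective : Function.Injective (jpt e) := fun p q h => by
  have := congrArg e h
  rw [e_jpt, e_jpt] at this
  exact WithTop.coe_injective this

lemma jpt_ne_jtop (p : ℕ × WithTop ℕ) : jpt e p ≠ jtop e := fun h => by
  have := congrArg e h
  rw [e_jpt, e_jtop] at this
  exact WithTop.coe_ne_top this

lemma eq_jtop_or_jpt (x : JT) : x = jtop e ∨ ∃ p, x = jpt e p := by
  rcases hx : e x with _ | p
  · left; rw [← e.symm_apply_apply x, hx]; rfl
  · right; exact ⟨p, by rw [← e.symm_apply_apply x, hx]; rfl⟩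

include horder

lemma le_jtop (a : JT) : a ≤ jtop e := (horder _ _).2 (Or.inl (e_jtop e))

lemma jtop_le {x : JT} (h : jtop e ≤ x) : x = jtop e := by
  rcases (horder _ _).1 h with h' | ⟨p, q, hp, _, _⟩
  · rw [← e.symm_apply_apply x, h']; rfl
  · rw [e_jtop] at hp; exact absurd hp.symm (WithTop.coe_ne_top)

lemma jpt_le_jpt {p q : ℕ × WithTop ℕ} :
    jpt e p ≤ jpt e q ↔ ((p.1 = q.1 ∧ p.2 ≤ q.2) ∨ (q.2 = ⊤ ∧ p.2 ≤ (q.1 : WithTop ℕ))) := by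
  rw [horder]
  constructor
  · rintro (h | ⟨p', q', hp, hq, h⟩)
    · rw [e_jpt] at h; exact absurd h WithTop.coe_ne_top
    · rw [e_jpt] at hp hq
      rwa [WithTop.coe_injective hp, WithTop.coe_injective hq]
  · intro h
    exact Or.inr ⟨p, q, e_jpt e p, e_jpt e q, h⟩

lemma not_jtop_le_jpt (p : ℕ × WithTop ℕ) : ¬ jtop e ≤ jpt e p := fun h =>
  jpt_ne_jtop e p (jtop_le e horder h)

/-- If `b` dominates unboundedly many points of column `k`, it dominates `(k,⊤)`. -/
lemma col_ub {k : ℕ} {b : JT}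
    (h : ∀ N : ℕ, ∃ n : ℕ, N ≤ n ∧ jpt e (k, (n : WithTop ℕ)) ≤ b) :
    jpt e (k, (⊤ : WithTop ℕ)) ≤ b := by
  rcases eq_jtop_or_jpt e b with rfl | ⟨q, rfl⟩
  · exact le_jtop e horder _
  · rw [jpt_le_jpt e horder]
    rcases hq2 : q.2 with _ | s
    · -- q.2 = ⊤
      obtain ⟨n, hn, hle⟩ := h (q.1 + 1)
      rcases (jpt_le_jpt e horder).1 hle with ⟨h1, _⟩ | ⟨_, h2⟩
      · exact Or.inl ⟨h1, le_top⟩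
      · exfalso
        have h2' : (n : WithTop ℕ) ≤ (q.1 : WithTop ℕ) := h2
        have : n ≤ q.1 := by exact_mod_cast h2'
        omega
    · -- q.2 finite: impossible
      exfalso
      obtain ⟨n, hn, hle⟩ := h (s + 1)
      rcases (jpt_le_jpt e horder).1 hle with ⟨_, h2⟩ | ⟨h1, _⟩
      · rw [hq2] at h2
        have h2' : (n : WithTop ℕ) ≤ (s : WithTop ℕ) := h2
        have : n ≤ s := by exact_mod_cast h2'
        omega
      · rw [hq2] at h1; simp at h1


lemma col_mono {k n m : ℕ} (h : n ≤ m) :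
    jpt e (k, (n : WithTop ℕ)) ≤ jpt e (k, (m : WithTop ℕ)) :=
  (jpt_le_jpt e horder).2 (Or.inl ⟨rfl, by
    show (n : WithTop ℕ) ≤ (m : WithTop ℕ); exact_mod_cast h⟩)

/-- characterization of Scott open sets of `JT`. -/
def GOpen (U : Set JT) : Prop :=
  IsUpperSet U ∧ ∀ k : ℕ, jpt e (k, (⊤ : WithTop ℕ)) ∈ U →
    ∃ n : ℕ, jpt e (k, (n : WithTop ℕ)) ∈ U

lemma scottOpen_iff (U : Set JT) : ScottOpen U ↔ GOpen e U := by
  constructor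
  · rintro ⟨hup, hin⟩
    refine ⟨hup, fun k hk => ?_⟩
    set dset : Set JT := Set.range (fun n : ℕ => jpt e (k, (n : WithTop ℕ))) with hdset
    have hd1 : dset.Nonempty := ⟨_, ⟨0, rfl⟩⟩
    have hd2 : DirectedOn (· ≤ ·) dset := by
      rintro _ ⟨n, rfl⟩ _ ⟨m, rfl⟩
      exact ⟨_, ⟨max n m, rfl⟩, col_mono e horder (le_max_left n m),
        col_mono e horder (le_max_right n m)⟩
    have hlub : IsLUB dset (jpt e (k, (⊤ : WithTop ℕ))) := by
      constructor
      · rintro _ ⟨n, rfl⟩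
        exact (jpt_le_jpt e horder).2 (Or.inl ⟨rfl, le_top⟩)
      · intro b hb
        exact col_ub e horder (fun N => ⟨N, le_rfl, hb ⟨N, rfl⟩⟩)
    obtain ⟨x, hxd, hxU⟩ := hin dset hd1 hd2 _ hlub hk
    obtain ⟨n, rfl⟩ := hxd
    exact ⟨n, hxU⟩
  · rintro ⟨hup, hcol⟩
    refine ⟨hup, fun d hdne hdir a hlub haU => ?_⟩
    by_cases hmax : ∃ x ∈ d, x ∈ upperBounds d
    · obtain ⟨x, hxd, hxub⟩ := hmax
      have hax : a = x := le_antisymm (hlub.2 hxub) (hlub.1 hxd)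
      exact ⟨x, hxd, hax ▸ haU⟩
    push_neg at hmax
    have htd : jtop e ∉ d := fun h =>
      hmax _ h (fun y _ => le_jtop e horder y)
    have hmaxpt : ∀ m : ℕ, jpt e (m, (⊤ : WithTop ℕ)) ∉ d := by
      intro m hm
      refine hmax _ hm (fun y hy => ?_)
      obtain ⟨z, hz, hyz, hmz⟩ := hdir y hy _ hm
      have hzeq : z = jpt e (m, (⊤ : WithTop ℕ)) := by
        rcases eq_jtop_or_jpt e z with rfl | ⟨q, rfl⟩
        · exact absurd hz htd
        · rcases (jpt_le_jpt e horder).1 hmz with ⟨h1, h2⟩ | ⟨_, h2⟩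
          · have hq2 : q.2 = ⊤ := top_le_iff.1 h2
            have hq : q = (m, (⊤ : WithTop ℕ)) := Prod.ext_iff.mpr ⟨h1.symm, hq2⟩
            rw [hq]
          · exact absurd h2 (by simp)
      exact hzeq ▸ hyz
    have hfin : ∀ x ∈ d, ∃ m n : ℕ, x = jpt e (m, (n : WithTop ℕ)) := by
      intro x hx
      rcases eq_jtop_or_jpt e x with rfl | ⟨q, rfl⟩
      · exact absurd hx htd
      · rcases hq2 : q.2 with _ | n
        · have hq : q = (q.1, (⊤ : WithTop ℕ)) := Prod.ext_iff.mpr ⟨rfl, hq2⟩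
          rw [hq] at hx
          exact absurd hx (hmaxpt q.1)
        · exact ⟨q.1, n, congrArg (jpt e) (Prod.ext_iff.mpr ⟨rfl, hq2⟩)⟩
    obtain ⟨x₀, hx₀⟩ := hdne
    obtain ⟨m₀, n₀, rfl⟩ := hfin x₀ hx₀
    have hcol0 : ∀ x ∈ d, ∃ n : ℕ, x = jpt e (m₀, (n : WithTop ℕ)) := by
      intro x hx
      obtain ⟨m, n, rfl⟩ := hfin x hx
      obtain ⟨z, hz, h1, h2⟩ := hdir _ hx _ hx₀
      obtain ⟨mz, nz, rfl⟩ := hfin z hz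
      have e1 := (jpt_le_jpt e horder).1 h1
      have e2 := (jpt_le_jpt e horder).1 h2
      have hm : m = mz := by
        rcases e1 with ⟨h, _⟩ | ⟨h, _⟩
        · exact h
        · exact absurd h (by simp)
      have hm0 : m₀ = mz := by
        rcases e2 with ⟨h, _⟩ | ⟨h, _⟩
        · exact h
        · exact absurd h (by simp)
      exact ⟨n, by rw [hm, ← hm0]⟩
    have hunb : ∀ N : ℕ, ∃ n : ℕ, N ≤ n ∧ jpt e (m₀, (n : WithTop ℕ)) ∈ d := by
      by_contra hbd
      push_neg at hbd
      obtain ⟨N, hN⟩ := hbd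
      set S : Set ℕ := {n : ℕ | jpt e (m₀, (n : WithTop ℕ)) ∈ d} with hS
      have hSne : S.Nonempty := ⟨n₀, hx₀⟩
      have hSbd : BddAbove S := by
        refine ⟨N, fun n hn => ?_⟩
        by_contra hc
        exact hN n (le_of_not_ge hc) hn
      have hmem := Nat.sSup_mem hSne hSbd
      refine hmax _ hmem (fun y hy => ?_)
      obtain ⟨n, rfl⟩ := hcol0 y hy
      exact col_mono e horder (le_csSup hSbd hy)
    have hlub' : IsLUB d (jpt e (m₀, (⊤ : WithTop ℕ))) := by
      constructor
      · intro y hy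
        obtain ⟨n, rfl⟩ := hcol0 y hy
        exact (jpt_le_jpt e horder).2 (Or.inl ⟨rfl, le_top⟩)
      · intro b hb
        refine col_ub e horder (fun N => ?_)
        obtain ⟨n, hn, hnd⟩ := hunb N
        exact ⟨n, hn, hb hnd⟩
    have ha : a = jpt e (m₀, (⊤ : WithTop ℕ)) := hlub.unique hlub'
    obtain ⟨n, hnU⟩ := hcol m₀ (ha ▸ haU)
    obtain ⟨n', hn', hd'⟩ := hunb n
    exact ⟨_, hd', hup (col_mono e horder hn') hnU⟩


section Top

variable [TopologicalSpace JT]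
  (hopen : ∀ U : Set JT, IsOpen U ↔ GOpen e U)

include hopen

lemma open_upper {U : Set JT} (hU : IsOpen U) : IsUpperSet U :=
  ((hopen U).1 hU).1

lemma isSat_iff (K : Set JT) : IsSat K ↔ IsUpperSet K := by
  constructor
  · intro h
    rw [h]
    exact isUpperSet_sInter (fun s hs => open_upper e horder hopen hs.1)
  · intro hup
    apply subset_antisymm
    · intro x hx
      exact mem_sInter.2 (fun U hU => hU.2 hx)
    · intro x hx
      by_contra hxK
      have hUopen : IsOpen {y : JT | ¬ y ≤ x} := by
        rw [hopen]
        constructor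
        · intro y z hyz hy hzx
          exact hy (le_trans hyz hzx)
        · intro k hk
          by_contra hc
          push_neg at hc
          simp only [Set.mem_setOf_eq, not_not] at hc
          exact hk (col_ub e horder (fun N => ⟨N, le_rfl, hc N⟩))
      have hKU : K ⊆ {y : JT | ¬ y ≤ x} := by
        intro y hy hyx
        exact hxK (hup hyx hy)
      exact (mem_sInter.1 hx _ ⟨hUopen, hKU⟩) le_rfl

lemma nonempty_sat_top {K : Set JT} (hne : K.Nonempty) (hup : IsUpperSet K) :
    jtop e ∈ K := by
  obtain ⟨x, hx⟩ := hne
  exact hup (le_jtop e horder x) hx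

/-- the set of columns in which `K` has a point with finite second coordinate. -/
def PiK (K : Set JT) : Set ℕ := {m : ℕ | ∃ n : ℕ, jpt e (m, (n : WithTop ℕ)) ∈ K}

lemma PiK_finite {K : Set JT} (hc : IsCompact K) : (PiK e K).Finite := by
  by_contra hinf
  have hinf' : (PiK e K).Infinite := hinf
  classical
  set g : ℕ → ℕ := fun m => sInf {n : ℕ | jpt e (m, (n : WithTop ℕ)) ∈ K} with hg
  set O : ℕ → Set JT := fun m => {x : JT | e x = ⊤ ∨ ∃ p : ℕ × WithTop ℕ, e x = ↑p ∧
    (p.2 = ⊤ ∨ p.1 ≤ m ∨ ((g p.1 + m + 1 : ℕ) : WithTop ℕ) ≤ p.2)} with hO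
  have hOopen : ∀ m, IsOpen (O m) := by
    intro m
    rw [hopen]
    constructor
    · rintro x y hxy (hx | ⟨p, hp, hcond⟩)
      · have : x = jtop e := by rw [← e.symm_apply_apply x, hx]; rfl
        rw [this] at hxy
        rw [jtop_le e horder hxy]
        exact Or.inl (e_jtop e)
      · have hxp : x = jpt e p := by rw [← e.symm_apply_apply x, hp]; rfl
        rcases eq_jtop_or_jpt e y with rfl | ⟨q, rfl⟩
        · exact Or.inl (e_jtop e)
        · refine Or.inr ⟨q, e_jpt e q, ?_⟩
          rw [hxp] at hxy
          rcases (jpt_le_jpt e horder).1 hxy with ⟨h1, h2⟩ | ⟨h1, _⟩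
          · rcases hcond with h | h | h
            · exact Or.inl (top_le_iff.1 (h ▸ h2))
            · exact Or.inr (Or.inl (h1 ▸ h))
            · exact Or.inr (Or.inr (h1 ▸ le_trans h h2))
          · exact Or.inl h1
    · intro k _
      refine ⟨g k + m + 1, Or.inr ⟨(k, ((g k + m + 1 : ℕ) : WithTop ℕ)), e_jpt e _, ?_⟩⟩
      exact Or.inr (Or.inr le_rfl)
  have hcover : K ⊆ ⋃ m, O m := by
    intro x _
    rcases eq_jtop_or_jpt e x with rfl | ⟨p, rfl⟩
    · exact Set.mem_iUnion.2 ⟨0, Or.inl (e_jtop e)⟩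
    · rcases hp2 : p.2 with _ | n
      · exact Set.mem_iUnion.2 ⟨0, Or.inr ⟨p, e_jpt e p, Or.inl (hp2)⟩⟩
      · exact Set.mem_iUnion.2 ⟨p.1, Or.inr ⟨p, e_jpt e p, Or.inr (Or.inl le_rfl)⟩⟩
  obtain ⟨t, ht⟩ := hc.elim_finite_subcover O hOopen hcover
  obtain ⟨k, hkPi, hk⟩ := hinf'.exists_gt (t.sup id)
  have hgk : jpt e (k, ((g k : ℕ) : WithTop ℕ)) ∈ K := Nat.sInf_mem hkPi
  have := ht hgk
  rw [Set.mem_iUnion₂] at this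
  obtain ⟨m, hmt, hm⟩ := this
  rcases hm with h | ⟨p, hp, hcond⟩
  · rw [e_jpt] at h; exact WithTop.coe_ne_top h
  · rw [e_jpt] at hp
    have hpeq : p = (k, ((g k : ℕ) : WithTop ℕ)) := (WithTop.coe_injective hp).symm
    subst hpeq
    rcases hcond with h | h | h
    · exact absurd h (by simp)
    · have hmle : m ≤ t.sup id := Finset.le_sup (f := id) hmt
      simp only at h
      omega
    · have h'' : ((g k + m + 1 : ℕ) : WithTop ℕ) ≤ ((g k : ℕ) : WithTop ℕ) := h
      have h' : g k + m + 1 ≤ g k := by exact_mod_cast h''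
      omega

lemma compact_of (K : Set JT) (hup : IsUpperSet K) (htK : jtop e ∈ K)
    (hfin : (PiK e K).Finite) : IsCompact K := by
  classical
  refine isCompact_of_finite_subcover (fun {ι} U hUo hUc => ?_)
  -- index for the top point
  obtain ⟨i₀, hi₀⟩ := Set.mem_iUnion.1 (hUc htK)
  set g : ℕ → ℕ := fun m => sInf {n : ℕ | jpt e (m, (n : WithTop ℕ)) ∈ K} with hg
  have hgK : ∀ k ∈ PiK e K, jpt e (k, ((g k : ℕ) : WithTop ℕ)) ∈ K :=
    fun k hk => Nat.sInf_mem hk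
  -- choose a cover index for each column
  have hch : ∀ k, ∃ i : ι, k ∈ PiK e K → jpt e (k, ((g k : ℕ) : WithTop ℕ)) ∈ U i := by
    intro k
    by_cases hk : k ∈ PiK e K
    · obtain ⟨i, hi⟩ := Set.mem_iUnion.1 (hUc (hgK k hk))
      exact ⟨i, fun _ => hi⟩
    · exact ⟨i₀, fun h => absurd h hk⟩
  choose c hc using hch
  -- choose a cover index for each maximal point in K
  have hch2 : ∀ m : ℕ, ∃ i : ι, jpt e (m, (⊤ : WithTop ℕ)) ∈ K →
      jpt e (m, (⊤ : WithTop ℕ)) ∈ U i := by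
    intro m
    by_cases hm : jpt e (m, (⊤ : WithTop ℕ)) ∈ K
    · obtain ⟨i, hi⟩ := Set.mem_iUnion.1 (hUc hm)
      exact ⟨i, fun _ => hi⟩
    · exact ⟨i₀, fun h => absurd h hm⟩
  choose dd hdd using hch2
  by_cases hKt : ∀ x ∈ K, x = jtop e
  · refine ⟨{i₀}, fun x hx => ?_⟩
    rw [hKt x hx]
    exact Set.mem_iUnion₂.2 ⟨i₀, Finset.mem_singleton_self i₀, hi₀⟩
  -- K contains a non-top point, hence some open in the cover contains a tail of max points
  push_neg at hKt
  have hN : ∃ (N : ℕ) (i₁ : ι), ∀ m : ℕ, N ≤ m → jpt e (m, (⊤ : WithTop ℕ)) ∈ U i₁ := by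
    obtain ⟨x, hxK, hxt⟩ := hKt
    rcases eq_jtop_or_jpt e x with rfl | ⟨p, rfl⟩
    · exact absurd rfl hxt
    obtain ⟨i₂, hi₂⟩ := Set.mem_iUnion.1 (hUc hxK)
    have hopen2 := (hopen (U i₂)).1 (hUo i₂)
    -- get a finite point in U i₂
    have hfinpt : ∃ (k n : ℕ), jpt e (k, (n : WithTop ℕ)) ∈ U i₂ := by
      rcases hp2 : p.2 with _ | n
      · have hp' : p = (p.1, (⊤ : WithTop ℕ)) := Prod.ext_iff.mpr ⟨rfl, hp2⟩
        rw [hp'] at hi₂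
        obtain ⟨n, hn⟩ := hopen2.2 p.1 hi₂
        exact ⟨p.1, n, hn⟩
      · have hp' : p = (p.1, ((n : ℕ) : WithTop ℕ)) := Prod.ext_iff.mpr ⟨rfl, hp2⟩
        rw [hp'] at hi₂
        exact ⟨p.1, n, hi₂⟩
    obtain ⟨k, n, hkn⟩ := hfinpt
    refine ⟨n, i₂, fun m hm => ?_⟩
    refine hopen2.1 ?_ hkn
    exact (jpt_le_jpt e horder).2 (Or.inr ⟨rfl, by
      show (n : WithTop ℕ) ≤ (m : WithTop ℕ); exact_mod_cast hm⟩)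
  obtain ⟨N, i₁, hN⟩ := hN
  refine ⟨({i₀, i₁} ∪ hfin.toFinset.image c ∪ (Finset.range N).image dd : Finset ι),
    fun x hx => ?_⟩
  rcases eq_jtop_or_jpt e x with rfl | ⟨p, rfl⟩
  · exact Set.mem_iUnion₂.2 ⟨i₀, by simp, hi₀⟩
  rcases hp2 : p.2 with _ | n
  · -- maximal point
    have hp' : p = (p.1, (⊤ : WithTop ℕ)) := Prod.ext_iff.mpr ⟨rfl, hp2⟩
    rw [hp'] at hx
    by_cases hm : N ≤ p.1
    · exact Set.mem_iUnion₂.2 ⟨i₁, by simp, hp' ▸ hN p.1 hm⟩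
    · refine Set.mem_iUnion₂.2 ⟨dd p.1, ?_, hp' ▸ hdd p.1 hx⟩
      simp only [Finset.mem_union, Finset.mem_image, Finset.mem_range]
      exact Or.inr ⟨p.1, by omega, rfl⟩
  · -- finite point
    have hp' : p = (p.1, ((n : ℕ) : WithTop ℕ)) := Prod.ext_iff.mpr ⟨rfl, hp2⟩
    rw [hp'] at hx
    have hkPi : p.1 ∈ PiK e K := ⟨n, hx⟩
    have hgle : g p.1 ≤ n := Nat.sInf_le hx
    have hmem : jpt e (p.1, ((n : ℕ) : WithTop ℕ)) ∈ U (c p.1) :=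
      open_upper e horder hopen (hUo (c p.1)) (col_mono e horder hgle) (hc p.1 hkPi)
    refine Set.mem_iUnion₂.2 ⟨c p.1, ?_, hp' ▸ hmem⟩
    simp only [Finset.mem_union, Finset.mem_image, Set.Finite.mem_toFinset]
    exact Or.inl (Or.inr ⟨p.1, hkPi, rfl⟩)

end Top

end Aux

/-- Let `JT` be Johnstone's dcpo `𝕁 = ℕ × (ℕ ∪ {∞})` with a top element `⊤`
adjoined, carrying the Scott topology.  Then `K(Σ𝕁_⊤)` (with the Smyth order) is a dcpo, but
`Σ𝕁_⊤` is not well-filtered. -/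
theorem stmt9 (JT : Type) [PartialOrder JT] [tJT : TopologicalSpace JT]
    (htop : tJT = scottTop JT)
    (e : JT ≃ WithTop (ℕ × WithTop ℕ))
    (horder : ∀ a b : JT, a ≤ b ↔ (e b = ⊤ ∨ ∃ p q : ℕ × WithTop ℕ,
      e a = (p : WithTop (ℕ × WithTop ℕ)) ∧ e b = (q : WithTop (ℕ × WithTop ℕ)) ∧
      ((p.1 = q.1 ∧ p.2 ≤ q.2) ∨ (q.2 = ⊤ ∧ p.2 ≤ (q.1 : WithTop ℕ))))) :
    (∀ d : Set (KS JT), d.Nonempty → DirectedOn (· ≤ ·) d → ∃ a : KS JT, IsLUB d a) ∧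
    ¬ WellFiltered JT := by
  have hopen : ∀ U : Set JT, IsOpen U ↔ GOpen e U := by
    rw [htop]
    exact fun U => scottOpen_iff e horder U
  constructor
  · -- K(Σ JT) is a dcpo
    intro d hdne _hdir
    obtain ⟨K₀, hK₀⟩ := hdne
    set Q : Set JT := ⋂ K ∈ d, (K : KS JT).1 with hQdef
    have hupK : ∀ K ∈ d, IsUpperSet (K : KS JT).1 :=
      fun K _ => (isSat_iff e horder hopen K.1).1 K.2.2.2
    have hQup : IsUpperSet Q := by
      intro x y hxy hx
      rw [hQdef, Set.mem_iInter₂] at hx ⊢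
      exact fun K hK => hupK K hK hxy (hx K hK)
    have htQ : jtop e ∈ Q := by
      rw [hQdef, Set.mem_iInter₂]
      exact fun K hK => nonempty_sat_top e horder hopen (K.2.1) (hupK K hK)
    have hQsub : Q ⊆ K₀.1 := Set.iInter₂_subset K₀ hK₀
    have hQPi : (PiK e Q).Finite := by
      refine ((PiK_finite e horder hopen K₀.2.2.1)).subset ?_
      rintro m ⟨n, hn⟩
      exact ⟨n, hQsub hn⟩
    have hQc : IsCompact Q := compact_of e horder hopen Q hQup htQ hQPi
    have hQsat : IsSat Q := (isSat_iff e horder hopen Q).2 hQup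
    refine ⟨⟨Q, ⟨jtop e, htQ⟩, hQc, hQsat⟩, ?_, ?_⟩
    · intro K hK
      show Q ⊆ K.1
      exact Set.iInter₂_subset K hK
    · intro b hb
      show b.1 ⊆ Q
      intro x hx
      rw [hQdef, Set.mem_iInter₂]
      exact fun K hK => hb hK hx
  · -- JT is not well-filtered
    intro hWF
    set Kn : ℕ → Set JT := fun n =>
      {x | x = jtop e ∨ ∃ m : ℕ, n ≤ m ∧ x = jpt e (m, (⊤ : WithTop ℕ))} with hKn
    have hKnup : ∀ n, IsUpperSet (Kn n) := by
      intro n x y hxy hx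
      rcases hx with rfl | ⟨m, hm, rfl⟩
      · exact Or.inl (jtop_le e horder hxy)
      · rcases eq_jtop_or_jpt e y with rfl | ⟨q, rfl⟩
        · exact Or.inl rfl
        · rcases (jpt_le_jpt e horder).1 hxy with ⟨h1, h2⟩ | ⟨_, h2⟩
          · have hq : q = (m, (⊤ : WithTop ℕ)) := Prod.ext_iff.mpr ⟨h1.symm, top_le_iff.1 h2⟩
            exact Or.inr ⟨m, hm, by rw [hq]⟩
          · exact absurd h2 (by simp)
    have hKnPi : ∀ n, PiK e (Kn n) = ∅ := by
      intro n
      rw [Set.eq_empty_iff_forall_notMem]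
      rintro m ⟨k, (hk | ⟨m', _, hk⟩)⟩
      · exact jpt_ne_jtop e _ hk
      · have := jpt_injective e hk
        have h2 := congrArg Prod.snd this
        exact absurd h2 (by simp)
    have hKtop : ∀ n, jtop e ∈ Kn n := fun n => Or.inl rfl
    have hKc : ∀ n, IsCompact (Kn n) := fun n =>
      compact_of e horder hopen (Kn n) (hKnup n) (hKtop n)
        (by rw [hKnPi n]; exact Set.finite_empty)
    have hKsat : ∀ n, IsSat (Kn n) := fun n => (isSat_iff e horder hopen (Kn n)).2 (hKnup n)
    have hmono : ∀ n m : ℕ, n ≤ m → Kn m ⊆ Kn n := by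
      rintro n m hnm x (rfl | ⟨k, hk, rfl⟩)
      · exact Or.inl rfl
      · exact Or.inr ⟨k, le_trans hnm hk, rfl⟩
    have hUopen : IsOpen {x : JT | x = jtop e} := by
      rw [hopen]
      constructor
      · intro x y hxy hx
        rw [Set.mem_setOf_eq] at hx ⊢
        rw [hx] at hxy
        exact jtop_le e horder hxy
      · intro k hk
        exact absurd hk (jpt_ne_jtop e _)
    have hinter : ⋂₀ (Set.range Kn) ⊆ {x : JT | x = jtop e} := by
      intro x hx
      rcases (hx (Kn 0) ⟨0, rfl⟩ : x ∈ Kn 0) with rfl | ⟨m, _, rfl⟩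
      · rfl
      · rcases (hx (Kn (m + 1)) ⟨m + 1, rfl⟩ : _ ∈ Kn (m + 1)) with h | ⟨m', hm', h⟩
        · exact h
        · have := congrArg Prod.fst (jpt_injective e h)
          simp only at this
          omega
    obtain ⟨K, ⟨n, rfl⟩, hKU⟩ := hWF (Set.range Kn) ⟨Kn 0, 0, rfl⟩
      (by rintro K ⟨n, rfl⟩; exact ⟨⟨jtop e, hKtop n⟩, hKc n, hKsat n⟩)
      (by rintro K₁ ⟨n, rfl⟩ K₂ ⟨m, rfl⟩
          exact ⟨Kn (max n m), ⟨max n m, rfl⟩, hmono n _ (le_max_left n m),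
            hmono m _ (le_max_right n m)⟩)
      {x : JT | x = jtop e} hUopen hinter
    have hmem : jpt e (n, (⊤ : WithTop ℕ)) ∈ Kn n := Or.inr ⟨n, le_rfl, rfl⟩
    exact jpt_ne_jtop e _ (hKU hmem)
end

section
/- Let ℒ be the dcpo ℕ × ℕ × (ℕ ∪ {∞}) with the order described below, and Σℒ its Scott space. Then every family of nonempty compact saturated subsets of Σℒ that is filtered under reverse inclusion has nonempty intersection. -/
open Set Topology TopologicalSpace

universe u v

section Stmt11Aux

variable {L : Type} [PartialOrder L]

theorem stmt11_nat_le_nat {p q : ℕ} : ((p : WithTop ℕ) ≤ (q : WithTop ℕ)) ↔ p ≤ q := by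
  rw [Nat.cast_withTop, Nat.cast_withTop]; exact WithTop.coe_le_coe

theorem stmt11_nat_ne_top {p : ℕ} : (p : WithTop ℕ) ≠ ⊤ := by
  rw [Nat.cast_withTop]; exact WithTop.coe_ne_top

theorem stmt11_exists_nat {x : WithTop ℕ} (h : x ≠ ⊤) : ∃ n : ℕ, x = (n : WithTop ℕ) := by
  obtain ⟨n, hn⟩ := WithTop.ne_top_iff_exists.mp h
  exact ⟨n, by rw [Nat.cast_withTop]; exact hn.symm⟩

/-- If some element of `d` is an upper bound of `d`, then any lub of `d` lies in `d`. -/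
theorem stmt11_lub_mem_of_max {d : Set L} {a : L} (hlub : IsLUB d a)
    (h : ∃ x ∈ d, ∀ y ∈ d, y ≤ x) : a ∈ d := by
  obtain ⟨x, hxd, hub⟩ := h
  have h1 : x ≤ a := hlub.1 hxd
  have h2 : a ≤ x := hlub.2 hub
  have : a = x := le_antisymm h2 h1
  rw [this]; exact hxd

theorem stmt11_exists_ub (e : L ≃ ℕ × ℕ × WithTop ℕ)
    (horder : ∀ a b : L, a ≤ b ↔ LJiaLE (e a) (e b))
    {d T : Set L} (hT : T.Nonempty) (hTd : T ⊆ d)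
    (hcof : ∀ y ∈ d, ∃ z ∈ T, y ≤ z) (B : ℕ)
    (hB : ∀ x ∈ T, (e x).2.2 ≤ (B : WithTop ℕ))
    (hfib : ∀ x ∈ T, ∀ y ∈ T, (e x).1 = (e y).1 ∧ (e x).2.1 = (e y).2.1) :
    ∃ x ∈ d, ∀ y ∈ d, y ≤ x := by
  classical
  have hwit : ∀ x ∈ T, ∃ n : ℕ, (e x).2.2 = (n : WithTop ℕ) ∧ n ≤ B := by
    intro x hx
    have hne : (e x).2.2 ≠ ⊤ := by
      intro h
      have h2 := hB x hx
      rw [h, top_le_iff] at h2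
      exact stmt11_nat_ne_top h2
    obtain ⟨n, hn⟩ := stmt11_exists_nat hne
    refine ⟨n, hn, ?_⟩
    have h3 := hB x hx
    rw [hn] at h3
    exact stmt11_nat_le_nat.mp h3
  set S : Set ℕ := {n | ∃ x ∈ T, (e x).2.2 = (n : WithTop ℕ)} with hS
  have hSne : S.Nonempty := by
    obtain ⟨x0, hx0⟩ := hT
    obtain ⟨n, hn, _⟩ := hwit x0 hx0
    exact ⟨n, x0, hx0, hn⟩
  have hSbdd : BddAbove S := by
    refine ⟨B, ?_⟩
    rintro n ⟨x, hx, hxn⟩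
    obtain ⟨n', hn', hn'B⟩ := hwit x hx
    rw [hn'] at hxn
    have hcast : (n' : ℕ) ≤ n := stmt11_nat_le_nat.mp (le_of_eq hxn)
    have hcast2 : (n : ℕ) ≤ n' := stmt11_nat_le_nat.mp (le_of_eq hxn.symm)
    omega
  obtain ⟨x0, hx0T, hx0⟩ : ∃ x ∈ T, (e x).2.2 = ((sSup S : ℕ) : WithTop ℕ) :=
    Nat.sSup_mem hSne hSbdd
  refine ⟨x0, hTd hx0T, fun y hy => ?_⟩
  obtain ⟨z, hzT, hyz⟩ := hcof y hy
  refine le_trans hyz ((horder z x0).mpr (Or.inl ?_))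
  obtain ⟨h1, h2⟩ := hfib z hzT x0 hx0T
  refine ⟨h1, h2, ?_⟩
  obtain ⟨n, hn, _⟩ := hwit z hzT
  have hnS : n ∈ S := ⟨z, hzT, hn⟩
  have hle : n ≤ sSup S := le_csSup hSbdd hnS
  rw [hn, hx0]
  exact stmt11_nat_le_nat.mpr hle

/-- Main structure lemma on lubs of directed sets in Jia's dcpo. -/
theorem stmt11_lub_strong (e : L ≃ ℕ × ℕ × WithTop ℕ)
    (horder : ∀ a b : L, a ≤ b ↔ LJiaLE (e a) (e b))
    {d : Set L} (hd : d.Nonempty) (hdir : DirectedOn (· ≤ ·) d)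
    {a : L} (hlub : IsLUB d a) (had : a ∉ d) (m : ℕ) :
    ∃ x ∈ d, (e x).1 = (e a).1 ∧ (e x).2.1 = (e a).2.1 ∧
      (m : WithTop ℕ) ≤ (e x).2.2 := by
  classical
  by_contra hcon
  push_neg at hcon
  set T : Set L := {x ∈ d | (e x).1 = (e a).1 ∧ (e x).2.1 = (e a).2.1} with hT
  apply had
  apply stmt11_lub_mem_of_max hlub
  by_cases hTne : T.Nonempty
  · -- fiber elements are cofinal, bounded by m
    obtain ⟨x0, hx0⟩ := hTne
    have hcof : ∀ y ∈ d, ∃ z ∈ T, y ≤ z := by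
      intro y hy
      obtain ⟨z, hzd, hx0z, hyz⟩ := hdir x0 hx0.1 y hy
      refine ⟨z, ⟨hzd, ?_⟩, hyz⟩
      rcases (horder x0 z).mp hx0z with ⟨e1, e2, _⟩ | ⟨e1, _, _⟩
      · exact ⟨e1 ▸ hx0.2.1, e2 ▸ hx0.2.2⟩
      · exfalso
        have hx01 : (e x0).1 = (e a).1 := hx0.2.1
        rcases (horder z a).mp (hlub.1 hzd) with ⟨f1, _, _⟩ | ⟨f1, _, _⟩
        · omega
        · omega
    have hBd : ∀ x ∈ T, (e x).2.2 ≤ (m : WithTop ℕ) := by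
      intro x hx
      exact le_of_lt (hcon x hx.1 hx.2.1 hx.2.2)
    have hfib : ∀ x ∈ T, ∀ y ∈ T, (e x).1 = (e y).1 ∧ (e x).2.1 = (e y).2.1 := by
      intro x hx y hy
      exact ⟨hx.2.1.trans hy.2.1.symm, hx.2.2.trans hy.2.2.symm⟩
    exact stmt11_exists_ub e horder ⟨x0, hx0⟩ (fun x hx => hx.1) hcof m hBd hfib
  · -- no fiber elements: all of d sits one level below and in one fiber
    have hcross : ∀ x ∈ d, (e a).1 = (e x).1 + 1 ∧
        (e x).2.2 ≤ ((e a).2.1 : WithTop ℕ) := by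
      intro x hx
      rcases (horder x a).mp (hlub.1 hx) with ⟨e1, e2, _⟩ | ⟨e1, e2, _⟩
      · exact absurd ⟨x, hx, e1, e2⟩ hTne
      · exact ⟨e1, e2⟩
    obtain ⟨x0, hx0⟩ := hd
    have honefib : ∀ y ∈ d, (e y).1 = (e x0).1 ∧ (e y).2.1 = (e x0).2.1 := by
      intro y hy
      obtain ⟨z, hzd, hx0z, hyz⟩ := hdir x0 hx0 y hy
      have hz := hcross z hzd
      have hx0' := hcross x0 hx0
      have hy' := hcross y hy
      have h1 : (e z).1 = (e x0).1 := by omega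
      have h2 : (e z).1 = (e y).1 := by omega
      have g1 : (e x0).2.1 = (e z).2.1 := by
        rcases (horder x0 z).mp hx0z with ⟨_, f2, _⟩ | ⟨f1, _, _⟩
        · exact f2
        · omega
      have g2 : (e y).2.1 = (e z).2.1 := by
        rcases (horder y z).mp hyz with ⟨_, f2, _⟩ | ⟨f1, _, _⟩
        · exact f2
        · omega
      exact ⟨by omega, g2.trans g1.symm⟩
    have hcof : ∀ y ∈ d, ∃ z ∈ d, y ≤ z := fun y hy => ⟨y, hy, le_refl y⟩
    have hfib : ∀ x ∈ d, ∀ y ∈ d, (e x).1 = (e y).1 ∧ (e x).2.1 = (e y).2.1 := by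
      intro x hx y hy
      obtain ⟨p1, p2⟩ := honefib x hx
      obtain ⟨q1, q2⟩ := honefib y hy
      exact ⟨p1.trans q1.symm, p2.trans q2.symm⟩
    exact stmt11_exists_ub e horder ⟨x0, hx0⟩ (fun x hx => hx) hcof (e a).2.1
      (fun x hx => (hcross x hx).2) hfib

/-- A criterion for Scott-openness in Jia's dcpo. -/
theorem stmt11_open_crit (e : L ≃ ℕ × ℕ × WithTop ℕ)
    (horder : ∀ a b : L, a ≤ b ↔ LJiaLE (e a) (e b))
    {U : Set L} (hup : IsUpperSet U)
    (hloc : ∀ a ∈ U, ∃ m : ℕ, ∀ x : L, (e x).1 = (e a).1 → (e x).2.1 = (e a).2.1 →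
      (m : WithTop ℕ) ≤ (e x).2.2 → x ∈ U) : ScottOpen U := by
  refine ⟨hup, fun d hd hdir a hlub haU => ?_⟩
  by_cases had : a ∈ d
  · exact ⟨a, had, haU⟩
  · obtain ⟨m, hm⟩ := hloc a haU
    obtain ⟨x, hxd, h1, h2, h3⟩ := stmt11_lub_strong e horder hd hdir hlub had m
    exact ⟨x, hxd, hm x h1 h2 h3⟩


theorem stmt11_openU3 (e : L ≃ ℕ × ℕ × WithTop ℕ)
    (horder : ∀ a b : L, a ≤ b ↔ LJiaLE (e a) (e b)) (g : ℕ → ℕ) :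
    ScottOpen {x : L | g (e x).1 ≤ (e x).2.1 ∧
      ((g ((e x).1 + 1) : ℕ) : WithTop ℕ) ≤ (e x).2.2} := by
  apply stmt11_open_crit e horder
  · intro x y hxy hx
    rcases (horder x y).mp hxy with ⟨e1, e2, e3⟩ | ⟨e1, e2, e3⟩
    · refine ⟨?_, ?_⟩
      · rw [← e1, ← e2]; exact hx.1
      · rw [← e1]; exact le_trans hx.2 e3
    · refine ⟨?_, ?_⟩
      · rw [e1]
        exact stmt11_nat_le_nat.mp (le_trans hx.2 e2)
      · rw [e3]; exact le_top
  · intro a ha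
    refine ⟨g ((e a).1 + 1), fun x h1 h2 h3 => ⟨?_, ?_⟩⟩
    · rw [h1, h2]; exact ha.1
    · rw [h1]; exact h3

theorem stmt11_openU2 (e : L ≃ ℕ × ℕ × WithTop ℕ)
    (horder : ∀ a b : L, a ≤ b ↔ LJiaLE (e a) (e b)) (N j : ℕ) :
    ScottOpen {x : L | N + 1 ≤ (e x).1 ∨ ((e x).1 = N ∧ (e x).2.1 = j)} := by
  apply stmt11_open_crit e horder
  · intro x y hxy hx
    rcases (horder x y).mp hxy with ⟨e1, e2, _⟩ | ⟨e1, _, _⟩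
    · rcases hx with h | h
      · exact Or.inl (by omega)
      · exact Or.inr ⟨by omega, e2 ▸ h.2⟩
    · rcases hx with h | h
      · exact Or.inl (by omega)
      · exact Or.inl (by omega)
  · intro a ha
    refine ⟨0, fun x h1 h2 _ => ?_⟩
    rcases ha with h | h
    · exact Or.inl (by omega)
    · exact Or.inr ⟨by omega, h2.trans h.2⟩

theorem stmt11_bdd_levels [tL : TopologicalSpace L] (htop : tL = scottTop L)
    (e : L ≃ ℕ × ℕ × WithTop ℕ)
    (horder : ∀ a b : L, a ≤ b ↔ LJiaLE (e a) (e b))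
    {K : Set L} (hK : IsCompact K) : ∃ N, ∀ x ∈ K, (e x).1 < N := by
  have hopen : ∀ V : Set L, ScottOpen V → IsOpen V := by
    intro V h
    rw [htop]
    exact h
  by_contra hcon
  push_neg at hcon
  choose f hfK hfl using hcon
  set X : ℕ → L := fun r => Nat.rec (f 0) (fun _ p => f ((e p).1 + 1)) r with hX
  have hXK : ∀ r, X r ∈ K := by
    intro r
    cases r with
    | zero => exact hfK 0
    | succ n => exact hfK _
  have hXs : ∀ r, (e (X r)).1 + 1 ≤ (e (X (r+1))).1 := fun r => hfl ((e (X r)).1 + 1)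
  have hXmono : ∀ r, r ≤ (e (X r)).1 := by
    intro r
    induction r with
    | zero => exact Nat.zero_le _
    | succ n ih => have := hXs n; omega
  set J : ℕ → ℕ := fun mm => (Finset.range (mm + 1)).sup
      (fun r => if (e (X r)).1 = mm then (e (X r)).2.1 + 1 else 0) with hJ
  have hJd : ∀ r, (e (X r)).2.1 < J ((e (X r)).1) := by
    intro r
    have hr : r ∈ Finset.range ((e (X r)).1 + 1) := Finset.mem_range.mpr (by
      have := hXmono r; omega)
    have hle := Finset.le_sup
      (f := fun s => if (e (X s)).1 = (e (X r)).1 then (e (X s)).2.1 + 1 else 0) hr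
    have hFr : (fun s => if (e (X s)).1 = (e (X r)).1 then (e (X s)).2.1 + 1 else 0) r
        = (e (X r)).2.1 + 1 := if_pos rfl
    rw [show (if (e (X r)).1 = (e (X r)).1 then (e (X r)).2.1 + 1 else 0) = (e (X r)).2.1 + 1 from hFr] at hle
    rw [hJ]
    exact lt_of_lt_of_le (Nat.lt_succ_self _) hle
  set g : ℕ → ℕ → ℕ := fun n mm => if mm ≤ n then 0 else J mm with hg
  set U : ℕ → Set L := fun n => {x : L | g n (e x).1 ≤ (e x).2.1 ∧
      ((g n ((e x).1 + 1) : ℕ) : WithTop ℕ) ≤ (e x).2.2} with hU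
  have hUopen : ∀ n, IsOpen (U n) := fun n => hopen _ (stmt11_openU3 e horder (g n))
  have hcov : K ⊆ ⋃ n, U n := by
    intro x _
    refine mem_iUnion.mpr ⟨(e x).1 + 1, ?_, ?_⟩
    · have : g ((e x).1 + 1) (e x).1 = 0 := if_pos (by omega)
      rw [this]; omega
    · have h0 : g ((e x).1 + 1) ((e x).1 + 1) = 0 := if_pos le_rfl
      rw [h0]
      simp
  obtain ⟨t, ht⟩ := hK.elim_finite_subcover U hUopen hcov
  set r := (t.sup id) + 1 with hr
  obtain ⟨n, hnt, hxn⟩ := mem_iUnion₂.mp (ht (hXK r))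
  have hnr : n < r := by
    have := Finset.le_sup (f := id) hnt
    simp only [id] at this
    omega
  have hlvl : ¬ ((e (X r)).1 ≤ n) := by
    have := hXmono r; omega
  have hgn : g n (e (X r)).1 = J (e (X r)).1 := if_neg hlvl
  have h1 := hxn.1
  rw [hgn] at h1
  exact absurd h1 (not_le.mpr (hJd r))

theorem stmt11_fibers_finite [tL : TopologicalSpace L] (htop : tL = scottTop L)
    (e : L ≃ ℕ × ℕ × WithTop ℕ)
    (horder : ∀ a b : L, a ≤ b ↔ LJiaLE (e a) (e b))
    {K : Set L} (hK : IsCompact K) (N : ℕ)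
    (hlev : ∀ x ∈ K, N ≤ (e x).1) :
    ∃ t : Finset ℕ, ∀ x ∈ K, (e x).1 = N → (e x).2.1 ∈ t := by
  have hopen : ∀ V : Set L, ScottOpen V → IsOpen V := by
    intro V h
    rw [htop]
    exact h
  set U : ℕ → Set L := fun j =>
    {x : L | N + 1 ≤ (e x).1 ∨ ((e x).1 = N ∧ (e x).2.1 = j)} with hU
  have hUopen : ∀ j, IsOpen (U j) := fun j => hopen _ (stmt11_openU2 e horder N j)
  have hcov : K ⊆ ⋃ j, U j := by
    intro x hx
    refine mem_iUnion.mpr ⟨(e x).2.1, ?_⟩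
    have := hlev x hx
    by_cases h : (e x).1 = N
    · exact Or.inr ⟨h, rfl⟩
    · exact Or.inl (by omega)
  obtain ⟨t, ht⟩ := hK.elim_finite_subcover U hUopen hcov
  refine ⟨t, fun x hx hN => ?_⟩
  obtain ⟨j, hjt, hxj⟩ := mem_iUnion₂.mp (ht hx)
  rcases hxj with h | h
  · omega
  · rw [h.2]; exact hjt

theorem stmt11_sat_upper [tL : TopologicalSpace L] (htop : tL = scottTop L)
    {K : Set L} (hsat : IsSat K) {x y : L} (hx : x ∈ K) (hxy : x ≤ y) : y ∈ K := by
  rw [hsat]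
  refine mem_sInter.mpr fun U hU => ?_
  have hscott : ScottOpen U := by
    have h := hU.1
    rw [htop] at h
    exact h
  exact hscott.1 hxy (hU.2 hx)

end Stmt11Aux


/-- Let `L` be Jia's dcpo `ℕ × ℕ × (ℕ ∪ {∞})` (with the order `LJiaLE`),
carrying the Scott topology.  Every (nonempty) family of nonempty compact saturated subsets of
`ΣL` that is filtered under reverse inclusion has nonempty intersection. -/
theorem stmt11 (L : Type) [PartialOrder L] [tL : TopologicalSpace L]
    (htop : tL = scottTop L) (e : L ≃ ℕ × ℕ × WithTop ℕ)
    (horder : ∀ a b : L, a ≤ b ↔ LJiaLE (e a) (e b)) :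
    ∀ 𝒦 : Set (Set L), 𝒦.Nonempty →
      (∀ K ∈ 𝒦, K.Nonempty ∧ IsCompact K ∧ IsSat K) →
      (∀ K₁ ∈ 𝒦, ∀ K₂ ∈ 𝒦, ∃ K₃ ∈ 𝒦, K₃ ⊆ K₁ ∧ K₃ ⊆ K₂) →
      (⋂₀ 𝒦).Nonempty := by
  classical
  intro 𝒦 h𝒦ne hprops hfilt
  obtain ⟨K₀, hK₀⟩ := h𝒦ne
  obtain ⟨Nmax, hNmax⟩ := stmt11_bdd_levels htop e horder (hprops K₀ hK₀).2.1
  set m : Set L → ℕ := fun K => sInf {n | ∃ x ∈ K, (e x).1 = n} with hm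
  have hm_mem : ∀ K : Set L, K.Nonempty → ∃ x ∈ K, (e x).1 = m K := by
    rintro K ⟨x, hx⟩
    have hne : Set.Nonempty {n : ℕ | ∃ y ∈ K, (e y).1 = n} := ⟨(e x).1, x, hx, rfl⟩
    exact Nat.sInf_mem hne
  have hm_le : ∀ K : Set L, ∀ x ∈ K, m K ≤ (e x).1 := by
    intro K x hx
    exact Nat.sInf_le ⟨x, hx, rfl⟩
  set M : Set ℕ := {n | ∃ K, (K ∈ 𝒦 ∧ K ⊆ K₀) ∧ m K = n} with hM
  have hMne : M.Nonempty := ⟨m K₀, K₀, ⟨hK₀, subset_rfl⟩, rfl⟩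
  have hMbdd : BddAbove M := by
    refine ⟨Nmax, ?_⟩
    rintro n ⟨K, ⟨hK𝒦, hKsub⟩, rfl⟩
    obtain ⟨x, hxK, hxl⟩ := hm_mem K (hprops K hK𝒦).1
    have h1 := hNmax x (hKsub hxK)
    have h2 := hm_le K x hxK
    omega
  set N : ℕ := sSup M with hN
  have hNM : N ∈ M := Nat.sSup_mem hMne hMbdd
  obtain ⟨Kstar, ⟨hKstar𝒦, hKstarsub⟩, hKstarm⟩ := hNM
  have key1 : ∀ K, K ∈ 𝒦 → K ⊆ Kstar → ∀ x ∈ K, N ≤ (e x).1 := by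
    intro K hK hsub x hx
    rw [← hKstarm]
    exact hm_le Kstar x (hsub hx)
  have key2 : ∀ K, K ∈ 𝒦 → K ⊆ Kstar → ∃ x ∈ K, (e x).1 = N := by
    intro K hK hsub
    have hmem : m K ∈ M := ⟨K, ⟨hK, hsub.trans hKstarsub⟩, rfl⟩
    have hle : m K ≤ N := le_csSup hMbdd hmem
    obtain ⟨x0, hx0K, hx0l⟩ := hm_mem K (hprops K hK).1
    have hge : N ≤ m K := by
      have := key1 K hK hsub x0 hx0K
      omega
    obtain ⟨x, hxK, hxl⟩ := hm_mem K (hprops K hK).1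
    exact ⟨x, hxK, by omega⟩
  set F : Set L → Set ℕ := fun K => {j | ∃ x ∈ K, (e x).1 = N ∧ (e x).2.1 = j} with hF
  have hFfin : ∀ K, K ∈ 𝒦 → K ⊆ Kstar → (F K).Finite := by
    intro K hK hsub
    obtain ⟨t, ht⟩ := stmt11_fibers_finite htop e horder (hprops K hK).2.1 N
      (key1 K hK hsub)
    refine Set.Finite.subset t.finite_toSet ?_
    rintro j ⟨x, hxK, h1, h2⟩
    rw [← h2]
    exact ht x hxK h1
  have hFne : ∀ K, K ∈ 𝒦 → K ⊆ Kstar → (F K).Nonempty := by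
    intro K hK hsub
    obtain ⟨x, hxK, hxl⟩ := key2 K hK hsub
    exact ⟨(e x).2.1, x, hxK, hxl, rfl⟩
  set Mc : Set ℕ := {c | ∃ K, (K ∈ 𝒦 ∧ K ⊆ Kstar) ∧ (F K).ncard = c} with hMc
  have hMcne : Mc.Nonempty := ⟨(F Kstar).ncard, Kstar, ⟨hKstar𝒦, subset_rfl⟩, rfl⟩
  have hc₀ : sInf Mc ∈ Mc := Nat.sInf_mem hMcne
  obtain ⟨Km, ⟨hKm𝒦, hKmsub⟩, hKmcard⟩ := hc₀
  have key3 : ∀ K, K ∈ 𝒦 → K ⊆ Km → F K = F Km := by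
    intro K hK hsub
    have hsub' : K ⊆ Kstar := hsub.trans hKmsub
    have hFsub : F K ⊆ F Km := by
      rintro j ⟨x, hxK, h⟩
      exact ⟨x, hsub hxK, h⟩
    have hcard : (F Km).ncard ≤ (F K).ncard := by
      rw [hKmcard]
      exact Nat.sInf_le ⟨K, ⟨hK, hsub'⟩, rfl⟩
    exact Set.eq_of_subset_of_ncard_le hFsub hcard (hFfin Km hKm𝒦 hKmsub)
  obtain ⟨j0, hj0⟩ := hFne Km hKm𝒦 hKmsub
  refine ⟨e.symm (N, j0, ⊤), mem_sInter.mpr fun K hK => ?_⟩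
  obtain ⟨K₂, hK₂𝒦, hK₂K, hK₂Km⟩ := hfilt K hK Km hKm𝒦
  have hj0' : j0 ∈ F K₂ := by
    rw [key3 K₂ hK₂𝒦 hK₂Km]
    exact hj0
  obtain ⟨x, hxK₂, hxl, hxf⟩ := hj0'
  have hle : x ≤ e.symm (N, j0, ⊤) := by
    rw [horder]
    refine Or.inl ?_
    rw [Equiv.apply_symm_apply]
    exact ⟨hxl, hxf, le_top⟩
  exact hK₂K (stmt11_sat_upper htop (hprops K₂ hK₂𝒦).2.2 hxK₂ hle)
end

section
/- Let ℒ be the dcpo ℕ × ℕ × (ℕ ∪ {∞}) with the order described below. Then the Scott space Σℒ is well-filtered but not sober. -/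
open Set Topology TopologicalSpace

universe u v

namespace JiaAux
set_option linter.unusedSectionVars false

variable {L : Type} [PartialOrder L]

section OrderPart

variable (e : L ≃ ℕ × ℕ × WithTop ℕ)

/-- The point of `L` with coordinates `(i, j, k)`. -/
def pt (i j : ℕ) (k : WithTop ℕ) : L := e.symm (i, j, k)

@[simp] lemma e_pt (i j : ℕ) (k : WithTop ℕ) : e (pt e i j k) = (i, j, k) :=
  e.apply_symm_apply _

lemma pt_eta (x : L) : pt e (e x).1 (e x).2.1 (e x).2.2 = x := e.symm_apply_apply x

lemma pt_inj {i j i' j' : ℕ} {k k' : WithTop ℕ} (h : pt e i j k = pt e i' j' k') :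
    i = i' ∧ j = j' ∧ k = k' := by
  have := congrArg e h
  rw [e_pt, e_pt, Prod.ext_iff, Prod.ext_iff] at this
  exact ⟨this.1, this.2.1, this.2.2⟩

lemma wtop_exists {k : WithTop ℕ} (h : k ≠ ⊤) : ∃ n : ℕ, k = (n : WithTop ℕ) := by
  obtain ⟨n, hn⟩ := WithTop.ne_top_iff_exists.mp h
  exact ⟨n, hn.symm⟩

lemma wle {a b : ℕ} : (a : WithTop ℕ) ≤ (b : WithTop ℕ) ↔ a ≤ b := WithTop.coe_le_coe

lemma wne (n : ℕ) : (n : WithTop ℕ) ≠ ⊤ := WithTop.coe_ne_top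

lemma weq {a b : ℕ} : (a : WithTop ℕ) = (b : WithTop ℕ) ↔ a = b := WithTop.coe_inj

variable (ho : ∀ a b : L, a ≤ b ↔ LJiaLE (e a) (e b))
include ho

lemma pt_le_pt {i j i' j' : ℕ} {k k' : WithTop ℕ} :
    pt e i j k ≤ pt e i' j' k' ↔
      (i = i' ∧ j = j' ∧ k ≤ k') ∨ (i' = i + 1 ∧ k ≤ (j' : WithTop ℕ) ∧ k' = ⊤) := by
  rw [ho, e_pt, e_pt]; exact Iff.rfl

lemma le_top_chain (i j : ℕ) (k : WithTop ℕ) : pt e i j k ≤ pt e i j ⊤ :=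
  (pt_le_pt e ho).mpr (Or.inl ⟨rfl, rfl, le_top⟩)

lemma x_le_chain_top (x : L) : x ≤ pt e (e x).1 (e x).2.1 ⊤ := by
  rw [ho, e_pt]; exact Or.inl ⟨rfl, rfl, le_top⟩

lemma le_pt_iff (x : L) (i j : ℕ) (k : WithTop ℕ) :
    x ≤ pt e i j k ↔
      ((e x).1 = i ∧ (e x).2.1 = j ∧ (e x).2.2 ≤ k) ∨
      (i = (e x).1 + 1 ∧ (e x).2.2 ≤ (j : WithTop ℕ) ∧ k = ⊤) := by
  rw [ho, e_pt]; exact Iff.rfl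

lemma pt_le_iff (i j : ℕ) (k : WithTop ℕ) (x : L) :
    pt e i j k ≤ x ↔
      (i = (e x).1 ∧ j = (e x).2.1 ∧ k ≤ (e x).2.2) ∨
      ((e x).1 = i + 1 ∧ k ≤ ((e x).2.1 : WithTop ℕ) ∧ (e x).2.2 = ⊤) := by
  rw [ho, e_pt]; exact Iff.rfl

lemma lv_mono {x y : L} (h : x ≤ y) : (e x).1 ≤ (e y).1 := by
  rcases (ho x y).1 h with ⟨h1, -, -⟩ | ⟨h1, -, -⟩ <;> omega

/-- If `d` is contained in a single chain with uniformly bounded finite third coordinates,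
then `d` has a greatest element. -/
lemma chain_max {d : Set L} (hne : d.Nonempty) {i j B : ℕ}
    (hsame : ∀ x ∈ d, (e x).1 = i ∧ (e x).2.1 = j ∧ ∃ n : ℕ, n ≤ B ∧ (e x).2.2 = (n : WithTop ℕ)) :
    ∃ x₀ ∈ d, ∀ y ∈ d, y ≤ x₀ := by
  classical
  set S : Set ℕ := {n : ℕ | ∃ x ∈ d, (e x).2.2 = (n : WithTop ℕ)} with hS
  have hSne : S.Nonempty := by
    obtain ⟨x, hx⟩ := hne
    obtain ⟨-, -, n, -, hn⟩ := hsame x hx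
    exact ⟨n, x, hx, hn⟩
  have hSbdd : BddAbove S := by
    refine ⟨B, fun n hn => ?_⟩
    obtain ⟨x, hx, hxn⟩ := hn
    obtain ⟨-, -, m, hm, hm'⟩ := hsame x hx
    rw [hxn] at hm'
    have : n = m := by exact_mod_cast hm'
    omega
  have hmem := Nat.sSup_mem hSne hSbdd
  obtain ⟨x₀, hx₀, hx₀k⟩ := hmem
  refine ⟨x₀, hx₀, fun y hy => ?_⟩
  obtain ⟨hy1, hy2, n, -, hy3⟩ := hsame y hy
  obtain ⟨hx1, hx2, -⟩ := hsame x₀ hx₀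
  have hnS : n ∈ S := ⟨y, hy, hy3⟩
  have : n ≤ sSup S := le_csSup hSbdd hnS
  rw [ho]
  left
  refine ⟨by omega, by rw [hy2, hx2], ?_⟩
  rw [hy3, hx₀k]
  exact_mod_cast this

end OrderPart

end JiaAux
namespace JiaAux
section OrderPart2
variable {L : Type} [PartialOrder L]
variable (e : L ≃ ℕ × ℕ × WithTop ℕ) (ho : ∀ a b : L, a ≤ b ↔ LJiaLE (e a) (e b))
include ho

/-- Analysis of directed suprema in Jia's dcpo: either the lub belongs to the set, or the
set is cofinal in the chain of its lub. -/
lemma lub_cases {d : Set L} (hne : d.Nonempty) (hdir : DirectedOn (· ≤ ·) d)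
    {a : L} (hl : IsLUB d a) :
    a ∈ d ∨ ((e a).2.2 = ⊤ ∧ ∀ n : ℕ, ∃ x ∈ d, pt e (e a).1 (e a).2.1 (n : WithTop ℕ) ≤ x) := by
  classical
  by_cases had : a ∈ d
  · exact Or.inl had
  right
  have hub : ∀ x ∈ d, x ≤ a := fun x hx => hl.1 hx
  have hxa : ∀ x ∈ d, x ≠ a := fun x hx h => had (h ▸ hx)
  have hka : (e a).2.2 = ⊤ := by
    by_contra hka
    obtain ⟨m, hm⟩ := wtop_exists hka
    have hsame : ∀ x ∈ d, (e x).1 = (e a).1 ∧ (e x).2.1 = (e a).2.1 ∧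
        ∃ k : ℕ, k ≤ m ∧ (e x).2.2 = (k : WithTop ℕ) := by
      intro x hx
      rcases (ho x a).1 (hub x hx) with ⟨h1, h2, h3⟩ | ⟨-, -, h3⟩
      · rw [hm] at h3
        have h3' : (e x).2.2 ≠ ⊤ := ne_top_of_le_ne_top (wne m) h3
        obtain ⟨k, hk⟩ := wtop_exists h3'
        refine ⟨h1, h2, k, ?_, hk⟩
        rw [hk] at h3
        exact wle.mp h3
      · exact absurd h3 hka
    obtain ⟨x₀, hx₀, hmax⟩ := chain_max e ho hne hsame
    have h1 : a ≤ x₀ := hl.2 (fun t ht => hmax t ht)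
    exact hxa x₀ hx₀ (le_antisymm (hub x₀ hx₀) h1)
  refine ⟨hka, ?_⟩
  intro n
  by_contra hno
  push_neg at hno
  have hclass : ∀ x ∈ d, ((e x).1 = (e a).1 ∧ (e x).2.1 = (e a).2.1 ∧ (e x).2.2 ≠ ⊤)
      ∨ ((e a).1 = (e x).1 + 1 ∧ (e x).2.2 ≤ ((e a).2.1 : WithTop ℕ)) := by
    intro x hx
    rcases (ho x a).1 (hub x hx) with ⟨h1, h2, h3⟩ | ⟨h1, h2, -⟩
    · left
      refine ⟨h1, h2, fun hk => hxa x hx ?_⟩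
      apply e.injective
      rw [Prod.ext_iff]
      exact ⟨h1, by rw [Prod.ext_iff]; exact ⟨h2, by rw [hk, hka]⟩⟩
    · right; exact ⟨h1, h2⟩
  by_cases hT : ∃ y ∈ d, (e y).1 = (e a).1
  · obtain ⟨y, hyd, hyl⟩ := hT
    have hall : ∀ x ∈ d, (e x).1 = (e a).1 ∧ (e x).2.1 = (e a).2.1 ∧
        ∃ m : ℕ, m ≤ n ∧ (e x).2.2 = (m : WithTop ℕ) := by
      intro x hx
      rcases hclass x hx with ⟨h1, h2, h3⟩ | ⟨h1, h2⟩
      · obtain ⟨m, hm⟩ := wtop_exists h3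
        refine ⟨h1, h2, m, ?_, hm⟩
        by_contra hmn
        push_neg at hmn
        apply hno x hx
        rw [pt_le_iff e ho]
        left
        refine ⟨h1.symm, h2.symm, ?_⟩
        rw [hm]
        exact wle.mpr (by omega)
      · exfalso
        obtain ⟨z, hzd, hxz, hyz⟩ := hdir x hx y hyd
        rcases hclass z hzd with ⟨hz1, -, hz3⟩ | ⟨hz1, -⟩
        · rcases (ho x z).1 hxz with ⟨hc1, -, -⟩ | ⟨-, -, hc3⟩
          · omega
          · exact hz3 hc3
        · have := lv_mono e ho hyz
          omega
    obtain ⟨x₀, hx₀, hmax⟩ := chain_max e ho hne hall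
    have h1 : a ≤ x₀ := hl.2 (fun t ht => hmax t ht)
    exact hxa x₀ hx₀ (le_antisymm (hub x₀ hx₀) h1)
  · push_neg at hT
    have hlow : ∀ x ∈ d, (e a).1 = (e x).1 + 1 := by
      intro x hx
      rcases hclass x hx with ⟨h1, -, -⟩ | ⟨h1, -⟩
      · exact absurd h1 (hT x hx)
      · exact h1
    obtain ⟨x₀, hx₀⟩ := hne
    have hchain' : ∀ y ∈ d, (e y).1 = (e x₀).1 ∧ (e y).2.1 = (e x₀).2.1 := by
      intro y hy
      obtain ⟨z, hzd, hxz, hyz⟩ := hdir x₀ hx₀ y hy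
      have hz := hlow z hzd
      have hx0 := hlow x₀ hx₀
      have hy0 := hlow y hy
      rcases (ho x₀ z).1 hxz with ⟨h1, h2, -⟩ | ⟨h1, -, -⟩
      · rcases (ho y z).1 hyz with ⟨g1, g2, -⟩ | ⟨g1, -, -⟩
        · exact ⟨by omega, by rw [g2, ← h2]⟩
        · omega
      · omega
    have hb : ∀ y ∈ d, y ≤ pt e (e x₀).1 (e x₀).2.1 ⊤ := by
      intro y hy
      rw [le_pt_iff e ho]
      left
      exact ⟨(hchain' y hy).1, (hchain' y hy).2, le_top⟩
    have h1 : a ≤ pt e (e x₀).1 (e x₀).2.1 ⊤ := hl.2 hb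
    have h2 := lv_mono e ho h1
    rw [e_pt] at h2
    have := hlow x₀ hx₀
    omega


/-- If every finite element of a chain is below `z`, so is the top of the chain. -/
lemma top_le_of_forall (z : L) (i j : ℕ)
    (hall : ∀ n : ℕ, pt e i j (n : WithTop ℕ) ≤ z) : pt e i j ⊤ ≤ z := by
  have h0 := (pt_le_iff e ho i j _ z).mp (hall ((e z).2.1 + 1))
  have hcl1 : i = (e z).1 ∧ j = (e z).2.1 := by
    rcases h0 with ⟨h1, h2, -⟩ | ⟨-, h2, -⟩
    · exact ⟨h1, h2⟩
    · exact absurd (wle.mp h2) (by omega)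
  have hkb : (e z).2.2 = ⊤ := by
    by_contra hkb
    obtain ⟨m, hm⟩ := wtop_exists hkb
    rcases (pt_le_iff e ho i j _ z).mp (hall (m + 1)) with ⟨-, -, h3⟩ | ⟨h1, -, -⟩
    · rw [hm] at h3
      exact absurd (wle.mp h3) (by omega)
    · omega
  rw [pt_le_iff e ho]
  left
  exact ⟨hcl1.1, hcl1.2, by rw [hkb]⟩


/-- Either `z` lies above the top of the chain `(i,j)`, or the finite chain elements below
`z` are bounded. -/
lemma chain_below_bound (i j : ℕ) (z : L) :
    pt e i j ⊤ ≤ z ∨ ∃ b : ℕ, ∀ m : ℕ, pt e i j (m : WithTop ℕ) ≤ z → m ≤ b := by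
  by_cases hz : (e z).1 = i ∧ (e z).2.1 = j ∧ (e z).2.2 = ⊤
  · left
    rw [pt_le_iff e ho]
    left
    exact ⟨hz.1.symm, hz.2.1.symm, by rw [hz.2.2]⟩
  · right
    refine ⟨(e z).2.1 + WithTop.untopD 0 ((e z).2.2), ?_⟩
    intro m hm
    rcases (pt_le_iff e ho i j _ z).mp hm with ⟨h1, h2, h3⟩ | ⟨-, h3, -⟩
    · have hnet : (e z).2.2 ≠ ⊤ := fun ht => hz ⟨h1.symm, h2.symm, ht⟩
      obtain ⟨c, hc⟩ := wtop_exists hnet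
      rw [hc] at h3
      have h4 := wle.mp h3
      have h5 : WithTop.untopD 0 ((e z).2.2) = c := by rw [hc]; rfl
      omega
    · have := wle.mp h3
      omega

end OrderPart2
end JiaAux
namespace JiaAux
section TopPart
variable {L : Type} [PartialOrder L]
variable (e : L ≃ ℕ × ℕ × WithTop ℕ) (ho : ∀ a b : L, a ≤ b ↔ LJiaLE (e a) (e b))
variable [ts : TopologicalSpace L] (hts : ts = scottTop L)
include ho hts

lemma isOpen_crit {U : Set L} :
    IsOpen U ↔ (IsUpperSet U ∧
      ∀ i j : ℕ, pt e i j ⊤ ∈ U → ∃ n : ℕ, pt e i j (n : WithTop ℕ) ∈ U) := by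
  subst hts
  show ScottOpen U ↔ _
  constructor
  · rintro ⟨hup, hd⟩
    refine ⟨hup, fun i j htop => ?_⟩
    have hne : ({x : L | ∃ n : ℕ, x = pt e i j (n : WithTop ℕ)}).Nonempty :=
      ⟨pt e i j (0 : ℕ), 0, rfl⟩
    have hdir : DirectedOn (· ≤ ·) {x : L | ∃ n : ℕ, x = pt e i j (n : WithTop ℕ)} := by
      rintro x ⟨n, rfl⟩ y ⟨m, rfl⟩
      refine ⟨pt e i j ((max n m : ℕ) : WithTop ℕ), ⟨max n m, rfl⟩, ?_, ?_⟩
      · exact (pt_le_pt e ho).mpr (Or.inl ⟨rfl, rfl, wle.mpr (le_max_left _ _)⟩)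
      · exact (pt_le_pt e ho).mpr (Or.inl ⟨rfl, rfl, wle.mpr (le_max_right _ _)⟩)
    have hlub : IsLUB {x : L | ∃ n : ℕ, x = pt e i j (n : WithTop ℕ)} (pt e i j ⊤) := by
      constructor
      · rintro x ⟨n, rfl⟩
        exact le_top_chain e ho i j _
      · intro b hb
        exact top_le_of_forall e ho b i j (fun n => hb ⟨n, rfl⟩)
    obtain ⟨x, ⟨n, rfl⟩, hxU⟩ := hd _ hne hdir _ hlub htop
    exact ⟨n, hxU⟩
  · rintro ⟨hup, hcrit⟩
    refine ⟨hup, fun d hne hdir a hlub haU => ?_⟩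
    rcases lub_cases e ho hne hdir hlub with had | ⟨hka, hcof⟩
    · exact ⟨a, had, haU⟩
    · have ha : pt e (e a).1 (e a).2.1 ⊤ = a := by rw [← hka]; exact pt_eta e a
      obtain ⟨n, hnU⟩ := hcrit (e a).1 (e a).2.1 (by rwa [ha])
      obtain ⟨x, hxd, hle⟩ := hcof n
      exact ⟨x, hxd, hup hle hnU⟩

lemma isClosed_crit {C : Set L} :
    IsClosed C ↔ (IsLowerSet C ∧
      ∀ i j : ℕ, (∀ n : ℕ, pt e i j (n : WithTop ℕ) ∈ C) → pt e i j ⊤ ∈ C) := by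
  rw [← isOpen_compl_iff, isOpen_crit e ho hts]
  constructor
  · rintro ⟨hup, h⟩
    refine ⟨isUpperSet_compl.mp hup, fun i j hall => ?_⟩
    by_contra htop
    obtain ⟨n, hn⟩ := h i j htop
    exact hn (hall n)
  · rintro ⟨hlow, h⟩
    refine ⟨isUpperSet_compl.mpr hlow, fun i j htop => ?_⟩
    by_contra hno
    push_neg at hno
    exact htop (h i j (fun n => not_not.mp (hno n)))

lemma open_upper {U : Set L} (hU : IsOpen U) : IsUpperSet U :=
  ((isOpen_crit e ho hts).1 hU).1

lemma closed_lower {C : Set L} (hC : IsClosed C) : IsLowerSet C :=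
  ((isClosed_crit e ho hts).1 hC).1

lemma down_closed (z : L) : IsClosed {x : L | x ≤ z} := by
  rw [isClosed_crit e ho hts]
  constructor
  · intro a b hba ha
    exact le_trans hba ha
  · intro i j hall
    exact top_le_of_forall e ho z i j hall

lemma closure_singleton_sub (z : L) : closure {z} ⊆ {x : L | x ≤ z} :=
  closure_minimal (by simp) (down_closed e ho hts z)

lemma sat_upper {K : Set L} (hsat : IsSat K) : IsUpperSet K := by
  intro x y hxy hx
  rw [hsat]
  intro V hV
  exact open_upper e ho hts hV.1 hxy (hV.2 hx)

lemma upper_top_mem {K : Set L} (hK : IsUpperSet K) {i j : ℕ} {k : WithTop ℕ}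
    (h : pt e i j k ∈ K) : pt e i j ⊤ ∈ K :=
  hK (le_top_chain e ho i j k) h

lemma tails {U : Set L} (hU : IsOpen U) {i₀ j₀ : ℕ} {k₀ : WithTop ℕ}
    (hx : pt e i₀ j₀ k₀ ∈ U) :
    ∀ i : ℕ, i₀ < i → ∃ c : ℕ, ∀ j : ℕ, c ≤ j → pt e i j ⊤ ∈ U := by
  obtain ⟨hup, hcrit⟩ := (isOpen_crit e ho hts).1 hU
  have step : ∀ (i j : ℕ) (k : WithTop ℕ), pt e i j k ∈ U →
      ∃ c : ℕ, ∀ j' : ℕ, c ≤ j' → pt e (i + 1) j' ⊤ ∈ U := by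
    intro i j k hk
    obtain ⟨n, hn⟩ : ∃ n : ℕ, pt e i j (n : WithTop ℕ) ∈ U := by
      rcases eq_or_ne k ⊤ with rfl | hk'
      · exact hcrit i j hk
      · obtain ⟨n, rfl⟩ := wtop_exists hk'
        exact ⟨n, hk⟩
    refine ⟨n, fun j' hj' => hup ?_ hn⟩
    exact (pt_le_pt e ho).mpr (Or.inr ⟨rfl, wle.mpr hj', rfl⟩)
  intro i
  induction i with
  | zero => omega
  | succ i ih =>
      intro hi
      rcases Nat.lt_succ_iff_lt_or_eq.mp hi with h | h
      · obtain ⟨c, hc⟩ := ih h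
        exact step i c ⊤ (hc c le_rfl)
      · subst h
        exact step i₀ j₀ k₀ hx

lemma opens_meet {U V : Set L} (hU : IsOpen U) (hV : IsOpen V)
    (hUne : U.Nonempty) (hVne : V.Nonempty) : (U ∩ V).Nonempty := by
  obtain ⟨x, hx⟩ := hUne
  obtain ⟨y, hy⟩ := hVne
  have hx' : pt e (e x).1 (e x).2.1 (e x).2.2 ∈ U := by rw [pt_eta]; exact hx
  have hy' : pt e (e y).1 (e y).2.1 (e y).2.2 ∈ V := by rw [pt_eta]; exact hy
  obtain ⟨c, hc⟩ := tails e ho hts hU hx' (max (e x).1 (e y).1 + 1) (by omega)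
  obtain ⟨c', hc'⟩ := tails e ho hts hV hy' (max (e x).1 (e y).1 + 1) (by omega)
  exact ⟨pt e (max (e x).1 (e y).1 + 1) (max c c') ⊤,
    hc _ (le_max_left _ _), hc' _ (le_max_right _ _)⟩

end TopPart

section CompactPart
variable {L : Type} [PartialOrder L] [ts : TopologicalSpace L]

lemma compact_nested {K : Set L} (hK : IsCompact K) {C : ℕ → Set L}
    (hcl : ∀ n, IsClosed (C n)) (hanti : ∀ m n : ℕ, m ≤ n → C n ⊆ C m)
    (hne : ∀ n, (K ∩ C n).Nonempty) : (K ∩ ⋂ n, C n).Nonempty := by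
  by_contra h
  have hcover : K ⊆ ⋃ n, (C n)ᶜ := by
    intro x hx
    by_contra hx'
    simp only [mem_iUnion, mem_compl_iff, not_exists, not_not] at hx'
    exact h ⟨x, hx, mem_iInter.mpr hx'⟩
  obtain ⟨t, ht⟩ := hK.elim_finite_subcover (fun n => (C n)ᶜ)
    (fun n => (hcl n).isOpen_compl) hcover
  obtain ⟨y, hyK, hyC⟩ := hne (t.sup id)
  obtain ⟨n, hnt, hyn⟩ : ∃ n ∈ t, y ∈ (C n)ᶜ := by
    have := ht hyK
    simpa using this
  exact hyn (hanti n (t.sup id) (Finset.le_sup (f := id) hnt) hyC)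

end CompactPart
end JiaAux
namespace JiaAux
section StructPart
set_option linter.unusedSectionVars false
variable {L : Type} [PartialOrder L]
variable (e : L ≃ ℕ × ℕ × WithTop ℕ) (ho : ∀ a b : L, a ≤ b ↔ LJiaLE (e a) (e b))
variable [ts : TopologicalSpace L] (hts : ts = scottTop L)
include ho hts

/-- A compact subset of Jia's dcpo meets only finitely many chains in finite elements. -/
lemma finite_chains {K : Set L} (hK : IsCompact K) :
    {p : ℕ × ℕ | ∃ n : ℕ, pt e p.1 p.2 (n : WithTop ℕ) ∈ K}.Finite := by
  by_contra hinf
  rw [← Set.not_infinite, not_not] at hinf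
  have f := hinf.natEmbedding
  have hmem : ∀ r : ℕ, ∃ n : ℕ, pt e (↑(f r) : ℕ × ℕ).1 (↑(f r) : ℕ × ℕ).2 (n : WithTop ℕ) ∈ K :=
    fun r => (f r).2
  choose κ hκ using hmem
  have hinj : ∀ r s : ℕ, (↑(f r) : ℕ × ℕ) = (↑(f s) : ℕ × ℕ) → r = s :=
    fun r s h => f.injective (Subtype.ext h)
  have hcl : ∀ m : ℕ, IsClosed {y : L | ∃ r : ℕ, m ≤ r ∧
      y ≤ pt e (↑(f r) : ℕ × ℕ).1 (↑(f r) : ℕ × ℕ).2 ((κ r : ℕ) : WithTop ℕ)} := by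
    intro m
    rw [isClosed_crit e ho hts]
    constructor
    · intro a b hba ha
      obtain ⟨r, hr, hle⟩ := ha
      exact ⟨r, hr, le_trans hba hle⟩
    · intro i j hall
      exfalso
      obtain ⟨r₀, hr₀, hle₀⟩ := hall 0
      rcases (pt_le_pt e ho).mp hle₀ with ⟨h1, h2, -⟩ | ⟨-, -, h3⟩
      · obtain ⟨r₁, hr₁, hle₁⟩ := hall (κ r₀ + 1)
        rcases (pt_le_pt e ho).mp hle₁ with ⟨g1, g2, g3⟩ | ⟨-, -, g3⟩
        · have : r₀ = r₁ := hinj r₀ r₁ (by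
            rw [Prod.ext_iff]
            exact ⟨by omega, by omega⟩)
          subst this
          have := wle.mp g3
          omega
        · exact wne _ g3
      · exact wne _ h3
  have hanti : ∀ m n : ℕ, m ≤ n →
      {y : L | ∃ r : ℕ, n ≤ r ∧ y ≤ pt e (↑(f r) : ℕ × ℕ).1 (↑(f r) : ℕ × ℕ).2 ((κ r : ℕ) : WithTop ℕ)} ⊆
      {y : L | ∃ r : ℕ, m ≤ r ∧ y ≤ pt e (↑(f r) : ℕ × ℕ).1 (↑(f r) : ℕ × ℕ).2 ((κ r : ℕ) : WithTop ℕ)} := by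
    intro m n hmn y ⟨r, hr, hle⟩
    exact ⟨r, by omega, hle⟩
  have hne : ∀ m : ℕ, (K ∩ {y : L | ∃ r : ℕ, m ≤ r ∧
      y ≤ pt e (↑(f r) : ℕ × ℕ).1 (↑(f r) : ℕ × ℕ).2 ((κ r : ℕ) : WithTop ℕ)}).Nonempty := by
    intro m
    exact ⟨pt e (↑(f m) : ℕ × ℕ).1 (↑(f m) : ℕ × ℕ).2 ((κ m : ℕ) : WithTop ℕ),
      hκ m, m, le_rfl, le_rfl⟩
  obtain ⟨y, hyK, hy⟩ := compact_nested hK hcl hanti hne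
  rw [mem_iInter] at hy
  have hch : ∀ r : ℕ, y ≤ pt e (↑(f r) : ℕ × ℕ).1 (↑(f r) : ℕ × ℕ).2 ((κ r : ℕ) : WithTop ℕ) →
      (↑(f r) : ℕ × ℕ) = ((e y).1, (e y).2.1) := by
    intro r hle
    rcases (le_pt_iff e ho _ _ _ _).mp hle with ⟨h1, h2, -⟩ | ⟨-, -, h3⟩
    · rw [Prod.ext_iff]
      exact ⟨h1.symm, h2.symm⟩
    · exact absurd h3 (wne _)
  obtain ⟨r₀, hr₀, hle₀⟩ := hy 0
  obtain ⟨r₁, hr₁, hle₁⟩ := hy (r₀ + 1)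
  have : r₀ = r₁ := hinj r₀ r₁ (by rw [hch r₀ hle₀, hch r₁ hle₁])
  omega

/-- A compact subset of Jia's dcpo has elements on only finitely many levels. -/
lemma finite_levels {K : Set L} (hK : IsCompact K) :
    {i : ℕ | ∃ x ∈ K, (e x).1 = i}.Finite := by
  by_contra hinf
  rw [← Set.not_infinite, not_not] at hinf
  have f := hinf.natEmbedding
  have hmem : ∀ r : ℕ, ∃ x ∈ K, (e x).1 = (↑(f r) : ℕ) := fun r => (f r).2
  choose x hxK hxl using hmem
  have hinj : ∀ r s : ℕ, (e (x r)).1 = (e (x s)).1 → r = s := by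
    intro r s h
    apply f.injective
    apply Subtype.ext
    rw [← hxl r, ← hxl s, h]
  have hcl : ∀ m : ℕ, IsClosed {y : L | ∃ r : ℕ, m ≤ r ∧ y ≤ x r} := by
    intro m
    rw [isClosed_crit e ho hts]
    constructor
    · intro a b hba ha
      obtain ⟨r, hr, hle⟩ := ha
      exact ⟨r, hr, le_trans hba hle⟩
    · intro i j hall
      by_contra htop
      have hbnd : ∀ r : ℕ, m ≤ r → ∃ b : ℕ, ∀ k : ℕ, pt e i j (k : WithTop ℕ) ≤ x r → k ≤ b := by
        intro r hr
        rcases chain_below_bound e ho i j (x r) with h | h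
        · exact absurd ⟨r, hr, h⟩ htop
        · exact h
      have hlv : ∀ k : ℕ, ∃ r : ℕ, m ≤ r ∧ ((e (x r)).1 = i ∨ (e (x r)).1 = i + 1) ∧
          pt e i j (k : WithTop ℕ) ≤ x r := by
        intro k
        obtain ⟨r, hr, hle⟩ := hall k
        refine ⟨r, hr, ?_, hle⟩
        rcases (pt_le_iff e ho _ _ _ _).mp hle with ⟨h1, -, -⟩ | ⟨h1, -, -⟩
        · left; omega
        · right; omega
      obtain ⟨r₁, hr₁, hl₁, hle₁⟩ := hlv 0
      obtain ⟨b₁, hb₁⟩ := hbnd r₁ hr₁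
      obtain ⟨r₂, hr₂, hl₂, hle₂⟩ := hlv (b₁ + 1)
      obtain ⟨b₂, hb₂⟩ := hbnd r₂ hr₂
      obtain ⟨r₃, hr₃, hl₃, hle₃⟩ := hlv (b₁ + b₂ + 1)
      have h12 : r₁ ≠ r₂ := by
        intro h; subst h
        have := hb₁ _ hle₂
        omega
      have h13 : r₁ ≠ r₃ := by
        intro h; subst h
        have := hb₁ _ hle₃
        omega
      have h23 : r₂ ≠ r₃ := by
        intro h; subst h
        have := hb₂ _ hle₃
        omega
      rcases hl₁ with a1 | a1 <;> rcases hl₂ with a2 | a2 <;> rcases hl₃ with a3 | a3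
      all_goals first
        | exact h12 (hinj _ _ (a1.trans a2.symm))
        | exact h13 (hinj _ _ (a1.trans a3.symm))
        | exact h23 (hinj _ _ (a2.trans a3.symm))
  have hanti : ∀ m n : ℕ, m ≤ n → {y : L | ∃ r : ℕ, n ≤ r ∧ y ≤ x r} ⊆
      {y : L | ∃ r : ℕ, m ≤ r ∧ y ≤ x r} := by
    intro m n hmn y ⟨r, hr, hle⟩
    exact ⟨r, by omega, hle⟩
  have hne : ∀ m : ℕ, (K ∩ {y : L | ∃ r : ℕ, m ≤ r ∧ y ≤ x r}).Nonempty := by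
    intro m
    exact ⟨x m, hxK m, m, le_rfl, le_rfl⟩
  obtain ⟨y, hyK, hy⟩ := compact_nested hK hcl hanti hne
  rw [mem_iInter] at hy
  have hch : ∀ r : ℕ, y ≤ x r → (e (x r)).1 = (e y).1 ∨ (e (x r)).1 = (e y).1 + 1 := by
    intro r hle
    rcases (ho y (x r)).1 hle with ⟨h1, -, -⟩ | ⟨h1, -, -⟩
    · left; omega
    · right; omega
  obtain ⟨r₁, hr₁, hle₁⟩ := hy 0
  obtain ⟨r₂, hr₂, hle₂⟩ := hy (r₁ + 1)
  obtain ⟨r₃, hr₃, hle₃⟩ := hy (r₂ + 1)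
  have h12 : r₁ ≠ r₂ := by omega
  have h13 : r₁ ≠ r₃ := by omega
  have h23 : r₂ ≠ r₃ := by omega
  rcases hch r₁ hle₁ with a1 | a1 <;> rcases hch r₂ hle₂ with a2 | a2 <;>
    rcases hch r₃ hle₃ with a3 | a3
  all_goals first
    | exact h12 (hinj _ _ (a1.trans a2.symm))
    | exact h13 (hinj _ _ (a1.trans a3.symm))
    | exact h23 (hinj _ _ (a2.trans a3.symm))

/-- A compact subset of Jia's dcpo contains only finitely many chain tops on its lowest level. -/
lemma finite_minlevel_tops {K : Set L} (hK : IsCompact K) (i₀ : ℕ)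
    (hmin : ∀ x ∈ K, i₀ ≤ (e x).1) :
    {j : ℕ | pt e i₀ j ⊤ ∈ K}.Finite := by
  by_contra hinf
  rw [← Set.not_infinite, not_not] at hinf
  have f := hinf.natEmbedding
  have hmem : ∀ r : ℕ, pt e i₀ (↑(f r) : ℕ) ⊤ ∈ K := fun r => (f r).2
  have hinj : ∀ r s : ℕ, (↑(f r) : ℕ) = (↑(f s) : ℕ) → r = s :=
    fun r s h => f.injective (Subtype.ext h)
  have hcl : ∀ m : ℕ, IsClosed {y : L | (e y).1 < i₀ ∨
      ∃ r : ℕ, m ≤ r ∧ y ≤ pt e i₀ (↑(f r) : ℕ) ⊤} := by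
    intro m
    rw [isClosed_crit e ho hts]
    constructor
    · intro a b hba ha
      rcases ha with h | ⟨r, hr, hle⟩
      · left
        have := lv_mono e ho hba
        omega
      · exact Or.inr ⟨r, hr, le_trans hba hle⟩
    · intro i j hall
      by_cases hi : i < i₀
      · left
        rw [e_pt]
        exact hi
      · rcases hall 0 with h | ⟨r, hr, hle⟩
        · rw [e_pt] at h
          omega
        · rcases (pt_le_pt e ho).mp hle with ⟨h1, h2, -⟩ | ⟨h1, -, -⟩
          · right
            refine ⟨r, hr, ?_⟩
            rw [pt_le_pt e ho]
            exact Or.inl ⟨h1, h2, le_rfl⟩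
          · omega
  have hanti : ∀ m n : ℕ, m ≤ n →
      {y : L | (e y).1 < i₀ ∨ ∃ r : ℕ, n ≤ r ∧ y ≤ pt e i₀ (↑(f r) : ℕ) ⊤} ⊆
      {y : L | (e y).1 < i₀ ∨ ∃ r : ℕ, m ≤ r ∧ y ≤ pt e i₀ (↑(f r) : ℕ) ⊤} := by
    intro m n hmn y hy
    rcases hy with h | ⟨r, hr, hle⟩
    · exact Or.inl h
    · exact Or.inr ⟨r, by omega, hle⟩
  have hne : ∀ m : ℕ, (K ∩ {y : L | (e y).1 < i₀ ∨
      ∃ r : ℕ, m ≤ r ∧ y ≤ pt e i₀ (↑(f r) : ℕ) ⊤}).Nonempty := by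
    intro m
    exact ⟨pt e i₀ (↑(f m) : ℕ) ⊤, hmem m, Or.inr ⟨m, le_rfl, le_rfl⟩⟩
  obtain ⟨y, hyK, hy⟩ := compact_nested hK hcl hanti hne
  rw [mem_iInter] at hy
  have hymin := hmin y hyK
  have hch : ∀ r : ℕ, y ≤ pt e i₀ (↑(f r) : ℕ) ⊤ → (e y).2.1 = (↑(f r) : ℕ) := by
    intro r hle
    rcases (le_pt_iff e ho _ _ _ _).mp hle with ⟨-, h2, -⟩ | ⟨h1, -, -⟩
    · exact h2
    · omega
  have h0 : ∀ m : ℕ, ∃ r : ℕ, m ≤ r ∧ y ≤ pt e i₀ (↑(f r) : ℕ) ⊤ := by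
    intro m
    rcases hy m with h | h
    · omega
    · exact h
  obtain ⟨r₁, hr₁, hle₁⟩ := h0 0
  obtain ⟨r₂, hr₂, hle₂⟩ := h0 (r₁ + 1)
  have : r₁ = r₂ := hinj r₁ r₂ (by rw [← hch r₁ hle₁, ← hch r₂ hle₂])
  omega

end StructPart
end JiaAux
namespace JiaAux
section MainPart
set_option linter.unusedSectionVars false
variable {L : Type} [PartialOrder L]
variable (e : L ≃ ℕ × ℕ × WithTop ℕ) (ho : ∀ a b : L, a ≤ b ↔ LJiaLE (e a) (e b))
variable [ts : TopologicalSpace L] (hts : ts = scottTop L)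
include ho hts

/-- The Scott space of Jia's dcpo is not sober: the whole space is an irreducible closed
set which is not a point closure. -/
lemma not_sober : ¬ SoberSp L := by
  intro hs
  have hirr : IsIrreducible (univ : Set L) := by
    constructor
    · exact ⟨e.symm (0, 0, 0), trivial⟩
    · intro u v hu hv hum hvm
      have h1 : u.Nonempty := by
        obtain ⟨x, -, hx⟩ := hum
        exact ⟨x, hx⟩
      have h2 : v.Nonempty := by
        obtain ⟨x, -, hx⟩ := hvm
        exact ⟨x, hx⟩
      obtain ⟨x, hx1, hx2⟩ := opens_meet e ho hts hu hv h1 h2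
      exact ⟨x, trivial, hx1, hx2⟩
  obtain ⟨z, hz, -⟩ := hs univ isClosed_univ hirr
  have hmem : pt e ((e z).1 + 1) 0 ⊤ ∈ closure {z} := by
    rw [← hz]
    trivial
  have hle : pt e ((e z).1 + 1) 0 ⊤ ≤ z := closure_singleton_sub e ho hts z hmem
  have hlv := lv_mono e ho hle
  rw [e_pt] at hlv
  omega

/-- The Scott space of Jia's dcpo is well-filtered. -/
lemma wellFiltered : WellFiltered L := by
  intro 𝒦 h𝒦ne hprop hdir U hU hsub
  classical
  have hupper : ∀ K ∈ 𝒦, IsUpperSet K := fun K hK => sat_upper e ho hts (hprop K hK).2.2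
  have hcptK : ∀ K ∈ 𝒦, IsCompact K := fun K hK => (hprop K hK).2.1
  have hKnon : ∀ K ∈ 𝒦, K.Nonempty := fun K hK => (hprop K hK).1
  obtain ⟨K₀, hK₀⟩ := h𝒦ne
  set lvs : Set L → Set ℕ := fun K => {i | ∃ x ∈ K, (e x).1 = i} with hlvs
  have hlvne : ∀ K ∈ 𝒦, (lvs K).Nonempty := by
    intro K hK
    obtain ⟨x, hx⟩ := hKnon K hK
    exact ⟨(e x).1, x, hx, rfl⟩
  have hlvfin : ∀ K ∈ 𝒦, (lvs K).Finite := fun K hK => finite_levels e ho hts (hcptK K hK)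
  set minl : Set L → ℕ := fun K => sInf (lvs K) with hminl
  have hminl_mem : ∀ K ∈ 𝒦, minl K ∈ lvs K := fun K hK => Nat.sInf_mem (hlvne K hK)
  have hminl_le : ∀ K ∈ 𝒦, ∀ x ∈ K, minl K ≤ (e x).1 := by
    intro K hK x hx
    exact Nat.sInf_le ⟨x, hx, rfl⟩
  -- maximal minimal level within the cone below K₀
  have hT1ne : ({n : ℕ | ∃ K, K ∈ 𝒦 ∧ K ⊆ K₀ ∧ minl K = n}).Nonempty :=
    ⟨minl K₀, K₀, hK₀, subset_rfl, rfl⟩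
  have hT1bdd : BddAbove {n : ℕ | ∃ K, K ∈ 𝒦 ∧ K ⊆ K₀ ∧ minl K = n} := by
    obtain ⟨N, hN⟩ := (hlvfin K₀ hK₀).bddAbove
    refine ⟨N, ?_⟩
    rintro n ⟨K, hK, hsubK, rfl⟩
    have hmm : minl K ∈ lvs K₀ := by
      obtain ⟨x, hx, hxl⟩ := hminl_mem K hK
      exact ⟨x, hsubK hx, hxl⟩
    exact hN hmm
  obtain ⟨K₁, hK₁𝒦, hK₁₀, hK₁min⟩ := Nat.sSup_mem hT1ne hT1bdd
  have hminstar : ∀ K, K ∈ 𝒦 → K ⊆ K₁ → ∀ x ∈ K,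
      sSup {n : ℕ | ∃ K, K ∈ 𝒦 ∧ K ⊆ K₀ ∧ minl K = n} ≤ (e x).1 := by
    intro K hK hsubK x hx
    have h1 : minl K₁ ≤ minl K := by
      apply Nat.sInf_le
      obtain ⟨y, hy, hyl⟩ := hminl_mem K hK
      exact ⟨y, hsubK hy, hyl⟩
    have h2 := hminl_le K hK x hx
    omega
  set istar := sSup {n : ℕ | ∃ K, K ∈ 𝒦 ∧ K ⊆ K₀ ∧ minl K = n} with histar
  have hminstar_eq : ∀ K, K ∈ 𝒦 → K ⊆ K₁ → minl K = istar := by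
    intro K hK hsubK
    have h2 : minl K ≤ istar := le_csSup hT1bdd ⟨K, hK, subset_trans hsubK hK₁₀, rfl⟩
    have h1 : istar ≤ minl K := by
      obtain ⟨y, hy, hyl⟩ := hminl_mem K hK
      have h3 := hminstar K hK hsubK y hy
      omega
    omega
  set S : Set L → Set ℕ := fun K => {j | pt e istar j ⊤ ∈ K} with hSdef
  have hSfin : ∀ K, K ∈ 𝒦 → K ⊆ K₁ → (S K).Finite := by
    intro K hK hsubK
    exact finite_minlevel_tops e ho hts (hcptK K hK) istar (hminstar K hK hsubK)
  have hSne : ∀ K, K ∈ 𝒦 → K ⊆ K₁ → (S K).Nonempty := by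
    intro K hK hsubK
    have hmem := hminl_mem K hK
    rw [hminstar_eq K hK hsubK] at hmem
    obtain ⟨x, hx, hxl⟩ := hmem
    refine ⟨(e x).2.1, ?_⟩
    have hxle : x ≤ pt e istar (e x).2.1 ⊤ := by
      rw [le_pt_iff e ho]
      left
      exact ⟨hxl, rfl, le_top⟩
    exact hupper K hK hxle hx
  -- minimize the (finite) cardinality of S K
  have hT2ne : ({n : ℕ | ∃ K, K ∈ 𝒦 ∧ K ⊆ K₁ ∧ (S K).ncard = n}).Nonempty :=
    ⟨(S K₁).ncard, K₁, hK₁𝒦, subset_rfl, rfl⟩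
  obtain ⟨K₂, hK₂𝒦, hK₂₁, hK₂card⟩ := Nat.sInf_mem hT2ne
  have hSstab : ∀ K, K ∈ 𝒦 → K ⊆ K₂ → S K = S K₂ := by
    intro K hK hsubK
    have hsubS : S K ⊆ S K₂ := fun j hj => hsubK hj
    have hcard : (S K₂).ncard ≤ (S K).ncard := by
      rw [hK₂card]
      exact Nat.sInf_le ⟨K, hK, subset_trans hsubK hK₂₁, rfl⟩
    exact Set.eq_of_subset_of_ncard_le hsubS hcard (hSfin K₂ hK₂𝒦 hK₂₁)
  -- pivot lemma
  have hpivot : ∀ P, P ∈ 𝒦 → ∀ x : L, (∀ K, K ∈ 𝒦 → K ⊆ P → x ∈ K) → x ∈ U := by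
    intro P hP x h
    apply hsub
    rw [mem_sInter]
    intro K hK
    obtain ⟨K', hK', h1, h2⟩ := hdir K hK P hP
    exact h1 (h K' hK' h2)
  have hopen := (isOpen_crit e ho hts).1 hU
  -- every chain can be forced into U along the family
  have hchain : ∀ i j : ℕ, ∃ K, K ∈ 𝒦 ∧ K ⊆ K₂ ∧
      ∀ k : WithTop ℕ, pt e i j k ∈ K → pt e i j k ∈ U := by
    intro i j
    by_cases hemp : ∃ K, K ∈ 𝒦 ∧ K ⊆ K₂ ∧ ∀ k : WithTop ℕ, pt e i j k ∉ K
    · obtain ⟨K, hK, hsubK, hnone⟩ := hemp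
      exact ⟨K, hK, hsubK, fun k hk => absurd hk (hnone k)⟩
    · push_neg at hemp
      have htopin : ∀ K, K ∈ 𝒦 → K ⊆ K₂ → pt e i j ⊤ ∈ K := by
        intro K hK hsubK
        obtain ⟨k, hk⟩ := hemp K hK hsubK
        exact upper_top_mem e ho hts (hupper K hK) hk
      have htU : pt e i j ⊤ ∈ U := hpivot K₂ hK₂𝒦 _ (fun K hK hs => htopin K hK hs)
      obtain ⟨n, hnU⟩ := hopen.2 i j htU
      by_cases hg : ∃ K, K ∈ 𝒦 ∧ K ⊆ K₂ ∧ ∀ m : ℕ, pt e i j (m : WithTop ℕ) ∈ K → n ≤ m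
      · obtain ⟨K, hK, hsubK, hbig⟩ := hg
        refine ⟨K, hK, hsubK, fun k hk => ?_⟩
        rcases eq_or_ne k ⊤ with rfl | hk'
        · exact htU
        · obtain ⟨m, rfl⟩ := wtop_exists hk'
          have hm := hbig m hk
          refine hopen.1 ?_ hnU
          rw [pt_le_pt e ho]
          exact Or.inl ⟨rfl, rfl, wle.mpr hm⟩
      · push_neg at hg
        have hg' : ∀ K, K ∈ 𝒦 → K ⊆ K₂ → ∃ m : ℕ, pt e i j (m : WithTop ℕ) ∈ K ∧ m < n := by
          intro K hK hsubK
          obtain ⟨m, hm1, hm2⟩ := hg K hK hsubK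
          exact ⟨m, hm1, by omega⟩
        set μ : Set L → ℕ := fun K => sInf {m : ℕ | pt e i j (m : WithTop ℕ) ∈ K} with hμdef
        have hμmem : ∀ K, K ∈ 𝒦 → K ⊆ K₂ → pt e i j ((μ K : ℕ) : WithTop ℕ) ∈ K := by
          intro K hK hsubK
          obtain ⟨m, hm, -⟩ := hg' K hK hsubK
          exact Nat.sInf_mem (⟨m, hm⟩ : {m : ℕ | pt e i j (m : WithTop ℕ) ∈ K}.Nonempty)
        have hμlt : ∀ K, K ∈ 𝒦 → K ⊆ K₂ → μ K < n := by
          intro K hK hsubK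
          obtain ⟨m, hm, hmn⟩ := hg' K hK hsubK
          have := Nat.sInf_le (show m ∈ {m : ℕ | pt e i j (m : WithTop ℕ) ∈ K} from hm)
          have h2 : μ K = sInf {m : ℕ | pt e i j (m : WithTop ℕ) ∈ K} := rfl
          omega
        have hT3ne : ({m : ℕ | ∃ K, K ∈ 𝒦 ∧ K ⊆ K₂ ∧ μ K = m}).Nonempty :=
          ⟨μ K₂, K₂, hK₂𝒦, subset_rfl, rfl⟩
        have hT3bdd : BddAbove {m : ℕ | ∃ K, K ∈ 𝒦 ∧ K ⊆ K₂ ∧ μ K = m} := by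
          refine ⟨n, ?_⟩
          rintro m ⟨K, hK, hsubK, rfl⟩
          exact le_of_lt (hμlt K hK hsubK)
        obtain ⟨K₃, hK₃𝒦, hK₃₂, hK₃μ⟩ := Nat.sSup_mem hT3ne hT3bdd
        have hμstar : ∀ K, K ∈ 𝒦 → K ⊆ K₃ → pt e i j ((μ K₃ : ℕ) : WithTop ℕ) ∈ K := by
          intro K hK hsubK
          have hsub2 : K ⊆ K₂ := subset_trans hsubK hK₃₂
          have h1 : μ K₃ ≤ μ K := Nat.sInf_le
            (show μ K ∈ {m : ℕ | pt e i j (m : WithTop ℕ) ∈ K₃} from hsubK (hμmem K hK hsub2))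
          have h2 : μ K ≤ μ K₃ := by
            rw [hK₃μ]
            exact le_csSup hT3bdd ⟨K, hK, hsub2, rfl⟩
          have heq : μ K = μ K₃ := le_antisymm h2 h1
          rw [← heq]
          exact hμmem K hK hsub2
        have hμU : pt e i j ((μ K₃ : ℕ) : WithTop ℕ) ∈ U := hpivot K₃ hK₃𝒦 _ hμstar
        refine ⟨K₃, hK₃𝒦, hK₃₂, fun k hk => ?_⟩
        rcases eq_or_ne k ⊤ with rfl | hk'
        · exact htU
        · obtain ⟨m, rfl⟩ := wtop_exists hk'
          have h1 : μ K₃ ≤ m := Nat.sInf_le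
            (show m ∈ {m : ℕ | pt e i j (m : WithTop ℕ) ∈ K₃} from hk)
          refine hopen.1 ?_ hμU
          rw [pt_le_pt e ho]
          exact Or.inl ⟨rfl, rfl, wle.mpr h1⟩
  -- a point of the intersection, giving tails of tops in U above level istar
  obtain ⟨j₀, hj₀⟩ := hSne K₂ hK₂𝒦 hK₂₁
  have hj₀U : pt e istar j₀ ⊤ ∈ U := by
    apply hpivot K₂ hK₂𝒦
    intro K hK hsubK
    have hj : j₀ ∈ S K := by
      rw [hSstab K hK hsubK]
      exact hj₀
    exact hj
  have htails := tails e ho hts hU (i₀ := istar) (j₀ := j₀) (k₀ := ⊤) hj₀U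
  -- the set of "bad" tops of K₂ is finite
  set TB : Set L := {x | x ∈ K₂ ∧ (e x).2.2 = ⊤ ∧ x ∉ U} with hTBdef
  have hTBfin : TB.Finite := by
    have hsubTB : TB ⊆ ⋃ i ∈ lvs K₂, {x | x ∈ TB ∧ (e x).1 = i} := by
      intro x hx
      exact mem_biUnion ⟨x, hx.1, rfl⟩ ⟨hx, rfl⟩
    refine Set.Finite.subset (Set.Finite.biUnion (hlvfin K₂ hK₂𝒦) ?_) hsubTB
    intro i hi
    rcases lt_trichotomy i istar with hlt | heq | hgt
    · refine Set.Finite.subset finite_empty ?_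
      rintro x ⟨⟨hxK₂, -, -⟩, hxl⟩
      have := hminstar K₂ hK₂𝒦 hK₂₁ x hxK₂
      exfalso
      omega
    · refine Set.Finite.subset ((hSfin K₂ hK₂𝒦 hK₂₁).image (fun j => pt e istar j ⊤)) ?_
      rintro x ⟨⟨hxK₂, hxtop, -⟩, hxl⟩
      have hxeq : pt e istar (e x).2.1 ⊤ = x := by
        have h := pt_eta e x
        rw [hxtop, hxl, heq] at h
        exact h
      refine ⟨(e x).2.1, ?_, hxeq⟩
      show pt e istar (e x).2.1 ⊤ ∈ K₂
      rw [hxeq]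
      exact hxK₂
    · obtain ⟨c, hc⟩ := htails i hgt
      refine Set.Finite.subset ((Set.finite_Iio c).image (fun j => pt e i j ⊤)) ?_
      rintro x ⟨⟨hxK₂, hxtop, hxU⟩, hxl⟩
      have hxeq : pt e i (e x).2.1 ⊤ = x := by
        have h := pt_eta e x
        rw [hxtop, hxl] at h
        exact h
      refine ⟨(e x).2.1, ?_, hxeq⟩
      show (e x).2.1 < c
      by_contra hjc
      push_neg at hjc
      apply hxU
      rw [← hxeq]
      exact hc _ hjc
  have hChfin : {p : ℕ × ℕ | ∃ n : ℕ, pt e p.1 p.2 (n : WithTop ℕ) ∈ K₂}.Finite :=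
    finite_chains e ho hts (hcptK K₂ hK₂𝒦)
  have hCfin : ({p : ℕ × ℕ | ∃ n : ℕ, pt e p.1 p.2 (n : WithTop ℕ) ∈ K₂} ∪
      (fun x => ((e x).1, (e x).2.1)) '' TB).Finite := hChfin.union (hTBfin.image _)
  choose F hF𝒦 hFsub hFU using hchain
  have hrefine : ∀ t : Finset (ℕ × ℕ), ∃ K, K ∈ 𝒦 ∧ K ⊆ K₂ ∧ ∀ p ∈ t, K ⊆ F p.1 p.2 := by
    intro t
    induction t using Finset.induction_on with
    | empty => exact ⟨K₂, hK₂𝒦, subset_rfl, by simp⟩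
    | @insert a s ha ih =>
        obtain ⟨K, hK, hKsub, hKall⟩ := ih
        obtain ⟨K', hK', h1, h2⟩ := hdir K hK (F a.1 a.2) (hF𝒦 a.1 a.2)
        refine ⟨K', hK', subset_trans h1 hKsub, ?_⟩
        intro p hp
        rcases Finset.mem_insert.mp hp with rfl | hp'
        · exact h2
        · exact subset_trans h1 (hKall p hp')
  obtain ⟨Kstar, hKstar𝒦, hKstarsub, hKstarF⟩ := hrefine hCfin.toFinset
  refine ⟨Kstar, hKstar𝒦, ?_⟩
  intro x hx
  by_cases hp : ((e x).1, (e x).2.1) ∈ ({p : ℕ × ℕ | ∃ n : ℕ, pt e p.1 p.2 (n : WithTop ℕ) ∈ K₂} ∪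
      (fun x => ((e x).1, (e x).2.1)) '' TB)
  · have hpF : Kstar ⊆ F (e x).1 (e x).2.1 :=
      hKstarF _ ((Set.Finite.mem_toFinset hCfin).mpr hp)
    have hxF : pt e (e x).1 (e x).2.1 (e x).2.2 ∈ F (e x).1 (e x).2.1 := by
      rw [pt_eta]
      exact hpF hx
    have := hFU (e x).1 (e x).2.1 (e x).2.2 hxF
    rwa [pt_eta] at this
  · have hxK₂ : x ∈ K₂ := hKstarsub hx
    rcases eq_or_ne (e x).2.2 ⊤ with htop' | hfin
    · by_contra hxU
      exact hp (Or.inr ⟨x, ⟨hxK₂, htop', hxU⟩, rfl⟩)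
    · obtain ⟨m, hm⟩ := wtop_exists hfin
      exfalso
      apply hp
      left
      refine ⟨m, ?_⟩
      show pt e (e x).1 (e x).2.1 (m : WithTop ℕ) ∈ K₂
      rw [← hm, pt_eta]
      exact hxK₂

end MainPart
end JiaAux
/-- Let `L` be Jia's dcpo `ℕ × ℕ × (ℕ ∪ {∞})` (with the order `LJiaLE`),
carrying the Scott topology.  Then `ΣL` is well-filtered but not sober. -/
theorem stmt12 (L : Type) [PartialOrder L] [tL : TopologicalSpace L]
    (htop : tL = scottTop L) (e : L ≃ ℕ × ℕ × WithTop ℕ)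
    (horder : ∀ a b : L, a ≤ b ↔ LJiaLE (e a) (e b)) :
    WellFiltered L ∧ ¬ SoberSp L := by
  exact ⟨JiaAux.wellFiltered e horder htop, JiaAux.not_sober e horder htop⟩
end
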